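/- arXiv:1910.12233 — 9 statements merged into one kernel-verified Lean document; each statement's English description precedes it below -/
import Mathlib

section
/- For a finite simple connected graph G, the constant Q := max over edges {v,w} of (1/deg(v) + 1/deg(w)) satisfies Q ≤ λ_max, where λ_max is the largest eigenvalue of the normalized Laplacian L = I - D^{-1}A. -/
open Matrix

/-- The normalized Laplacian `L = I - D⁻¹ A` of a graph, as a real matrix. -/
noncomputable def normLap {V : Type*} [Fintype V] [DecidableEq V] (G : SimpleGraph V)
    [DecidableRel G.Adj] : Matrix V V ℝ :=
  1 - Matrix.of (fun v w => if G.Adj v w then 1 / (G.degree v : ℝ) else 0)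

/-- Auxiliary algebraic identity. -/
lemma aux_alg (s t x : ℝ) (hs : s ≠ 0) (ht : t ≠ 0) :
    (0 - 1/(s*s)) * (x/t) = (0 - 1/(s*t)) * x / s := by
  field_simp
  ring

/-- Auxiliary arithmetic inequality. -/
lemma aux_arith (x y : ℝ) (hx0 : 0 < x) (hy0 : 0 < y) (hx : x ≤ 1) (hy : y ≤ 1) :
    (x+y)*(x+y) ≤ (x+y) + 2*x*y := by nlinarith

/-- Rayleigh-type bound: if every eigenvalue of a real symmetric matrix `S` is at most `lam`,
then `g ⬝ᵥ S *ᵥ g ≤ lam * (g ⬝ᵥ g)` for all `g`. -/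
lemma rayleigh_bound {V : Type*} [Fintype V] [DecidableEq V] (S : Matrix V V ℝ)
    (hS : S.IsHermitian) (lam : ℝ)
    (h : ∀ (μ : ℝ) (g : V → ℝ), g ≠ 0 → S.mulVec g = μ • g → μ ≤ lam) (g : V → ℝ) :
    g ⬝ᵥ S.mulVec g ≤ lam * (g ⬝ᵥ g) := by
  set M : Matrix V V ℝ := lam • (1 : Matrix V V ℝ) - S with hM
  have hMH : M.IsHermitian := by
    unfold Matrix.IsHermitian
    rw [hM, Matrix.conjTranspose_sub, hS]
    congr 1
    simp [Matrix.conjTranspose_smul]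
  have hMv : ∀ x : V → ℝ, M.mulVec x = lam • x - S.mulVec x := by
    intro x
    rw [hM, Matrix.sub_mulVec, Matrix.smul_mulVec, Matrix.one_mulVec]
  have hpsd : M.PosSemidef := by
    apply hMH.posSemidef_iff_eigenvalues_nonneg.mpr
    intro i
    set b := (hMH.eigenvectorBasis i : V → ℝ) with hb
    have hbne : b ≠ 0 := by
      have := hMH.eigenvectorBasis.orthonormal.ne_zero i
      intro hc
      apply this
      ext j
      exact congrFun hc j
    have hMb : M.mulVec b = hMH.eigenvalues i • b := hMH.mulVec_eigenvectorBasis i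
    have hSb : S.mulVec b = (lam - hMH.eigenvalues i) • b := by
      rw [hMv] at hMb
      have : S.mulVec b = lam • b - hMH.eigenvalues i • b := by
        rw [← hMb]; module
      rw [this, sub_smul]
    have := h (lam - hMH.eigenvalues i) b hbne hSb
    show (0:ℝ) ≤ _; linarith
  have := hpsd.dotProduct_mulVec_nonneg g
  have hstar : (star g : V → ℝ) = g := by ext j; simp
  rw [hstar, hMv] at this
  have hdot : g ⬝ᵥ (lam • g - S.mulVec g) = lam * (g ⬝ᵥ g) - g ⬝ᵥ S.mulVec g := by
    rw [dotProduct_sub, dotProduct_smul, smul_eq_mul]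
  rw [hdot] at this
  linarith

theorem stmt0 {V : Type*} [Fintype V] [DecidableEq V] (G : SimpleGraph V)
    [DecidableRel G.Adj] (hconn : G.Connected) (Q lam : ℝ)
    (hQ : IsGreatest {x : ℝ | ∃ v w : V, G.Adj v w ∧
      x = 1 / (G.degree v : ℝ) + 1 / (G.degree w : ℝ)} Q)
    (hlam : IsGreatest
      {μ : ℝ | ∃ f : V → ℝ, f ≠ 0 ∧ (normLap G).mulVec f = μ • f} lam) :
    Q ≤ lam := by
  classical
  obtain ⟨v, w, hvw, hQval⟩ := hQ.1
  -- all degrees are positive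
  have hdegpos : ∀ u : V, 0 < G.degree u := by
    intro u
    rw [G.degree_pos_iff_exists_adj u]
    rcases eq_or_ne u v with rfl | huv
    · exact ⟨w, hvw⟩
    · obtain ⟨p⟩ := hconn.preconnected u v
      have hnn : ¬ p.Nil := SimpleGraph.Walk.not_nil_of_ne huv
      rw [SimpleGraph.Walk.not_nil_iff_lt_length] at hnn
      exact ⟨p.getVert 1, by simpa using p.adj_getVert_succ hnn⟩
  set d : V → ℝ := fun u => (G.degree u : ℝ) with hd
  have hdpos : ∀ u, 0 < d u := fun u => by
    show (0:ℝ) < (G.degree u : ℝ)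
    exact_mod_cast hdegpos u
  have hspos : ∀ u, 0 < Real.sqrt (d u) := fun u => Real.sqrt_pos.mpr (hdpos u)
  -- the symmetrized normalized Laplacian
  set S : Matrix V V ℝ := Matrix.of (fun u u' =>
      (if u = u' then (1:ℝ) else 0) -
      (if G.Adj u u' then 1 / (Real.sqrt (d u) * Real.sqrt (d u')) else 0)) with hSdef
  have hSsymm : S.IsHermitian := by
    unfold Matrix.IsHermitian
    ext u u'
    simp only [hSdef, Matrix.conjTranspose_apply, Matrix.of_apply, star_trivial]
    by_cases he : u = u'
    · subst he; rfl
    · rw [if_neg (fun h => he h.symm), if_neg he]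
      by_cases hadj : G.Adj u u'
      · rw [if_pos hadj.symm, if_pos hadj, mul_comm]
      · rw [if_neg (fun h => hadj h.symm), if_neg hadj]
  -- every eigenvalue of S is an eigenvalue of normLap, hence ≤ lam
  have hkey : ∀ (μ : ℝ) (g : V → ℝ), g ≠ 0 → S.mulVec g = μ • g → μ ≤ lam := by
    intro μ g hg hSg
    apply hlam.2
    refine ⟨fun u => g u / Real.sqrt (d u), ?_, ?_⟩
    · intro hc
      apply hg
      ext u
      have := congrFun hc u
      simp only [Pi.zero_apply] at this ⊢
      have := div_eq_zero_iff.mp this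
      rcases this with h | h
      · exact h
      · exact absurd h (ne_of_gt (hspos u))
    · ext u
      have hSgu := congrFun hSg u
      simp only [Matrix.mulVec, dotProduct, Pi.smul_apply, smul_eq_mul] at hSgu ⊢
      have hexp : ∀ u' : V, (normLap G) u u' * (g u' / Real.sqrt (d u')) =
          (S u u' * g u') / Real.sqrt (d u) := by
        intro u'
        simp only [normLap, hSdef, Matrix.sub_apply, Matrix.of_apply, Matrix.one_apply]
        by_cases h : G.Adj u u'
        · have hne : u ≠ u' := h.ne
          rw [if_pos h, if_pos h, if_neg hne]
          have h1 : ((G.degree u : ℝ)) = Real.sqrt (d u) * Real.sqrt (d u) :=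
            (Real.mul_self_sqrt (hdpos u).le).symm
          rw [h1]
          exact aux_alg _ _ _ (hspos u).ne' (hspos u').ne'
        · rw [if_neg h, if_neg h]
          by_cases he : u = u'
          · subst he; simp
          · simp [he]
      calc (∑ u', (normLap G) u u' * (g u' / Real.sqrt (d u')))
          = (∑ u', S u u' * g u') / Real.sqrt (d u) := by
            rw [Finset.sum_div]; exact Finset.sum_congr rfl fun u' _ => hexp u'
        _ = (μ * g u) / Real.sqrt (d u) := by rw [hSgu]
        _ = μ * (g u / Real.sqrt (d u)) := by ring
  -- the test vector
  set a : ℝ := 1 / Real.sqrt (d v) with ha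
  set b : ℝ := -(1 / Real.sqrt (d w)) with hb
  set g : V → ℝ := a • (Pi.single v 1 : V → ℝ) + b • (Pi.single w 1 : V → ℝ) with hg
  have hne : v ≠ w := hvw.ne
  have hRay := rayleigh_bound S hSsymm lam hkey g
  -- compute g ⬝ᵥ g and g ⬝ᵥ S *ᵥ g
  have hsingle_dot : ∀ (x y : V), (Pi.single x (1:ℝ)) ⬝ᵥ (Pi.single y (1:ℝ)) =
      if x = y then 1 else 0 := by
    intro x y
    rw [single_dotProduct]
    simp [Pi.single_apply]
  have hSx : ∀ (x y : V), (Pi.single x (1:ℝ)) ⬝ᵥ S.mulVec (Pi.single y 1) = S x y := by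
    intro x y
    rw [single_dotProduct]
    simp [Matrix.mulVec_single]
  have hgg : g ⬝ᵥ g = a^2 + b^2 := by
    simp only [hg, dotProduct_add, add_dotProduct, dotProduct_smul,
      smul_dotProduct, smul_eq_mul, hsingle_dot]
    simp only [if_true]
    rw [if_neg hne, if_neg (Ne.symm hne)]
    ring
  have hSvv : S v v = 1 := by
    simp [hSdef, G.irrefl]
  have hSww : S w w = 1 := by
    simp [hSdef, G.irrefl]
  have hSvw : S v w = -(1 / (Real.sqrt (d v) * Real.sqrt (d w))) := by
    simp [hSdef, hvw, hne]
  have hSwv : S w v = -(1 / (Real.sqrt (d w) * Real.sqrt (d v))) := by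
    simp [hSdef, hvw.symm, Ne.symm hne]
  have hgSg : g ⬝ᵥ S.mulVec g =
      a^2 + b^2 + 2 * (a * b) * (-(1 / (Real.sqrt (d v) * Real.sqrt (d w)))) := by
    simp only [hg, Matrix.mulVec_add, Matrix.mulVec_smul, dotProduct_add,
      add_dotProduct, dotProduct_smul, smul_dotProduct, smul_eq_mul,
      hSx, hSvv, hSww, hSvw, hSwv]
    rw [mul_comm (Real.sqrt (d w)) (Real.sqrt (d v))]
    ring
  -- simplify with sqrt identities
  have hsv : Real.sqrt (d v) * Real.sqrt (d v) = d v := Real.mul_self_sqrt (hdpos v).le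
  have hsw : Real.sqrt (d w) * Real.sqrt (d w) = d w := Real.mul_self_sqrt (hdpos w).le
  have ha2 : a^2 = 1 / d v := by
    rw [ha, div_pow, one_pow, sq, hsv]
  have hb2 : b^2 = 1 / d w := by
    rw [hb, neg_sq, div_pow, one_pow, sq, hsw]
  have hab : a * b = -(1 / (Real.sqrt (d v) * Real.sqrt (d w))) := by
    rw [ha, hb]; field_simp
  have hQgg : g ⬝ᵥ g = Q := by
    have hQd : Q = 1 / d v + 1 / d w := hQval
    rw [hgg, ha2, hb2, hQd]
  have hcross : (-(1 / (Real.sqrt (d v) * Real.sqrt (d w)))) *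
      (-(1 / (Real.sqrt (d v) * Real.sqrt (d w)))) = 1 / (d v * d w) := by
    rw [neg_mul_neg, div_mul_div_comm, one_mul, mul_mul_mul_comm, hsv, hsw]
  have hgSgval : g ⬝ᵥ S.mulVec g = Q + 2 * (1 / (d v * d w)) := by
    have hQd : Q = 1 / d v + 1 / d w := hQval
    rw [hgSg, hab, ha2, hb2, hQd]
    rw [mul_assoc, hcross]
  -- conclude arithmetically
  rw [hgSgval, hQgg] at hRay
  have hQd : Q = 1 / d v + 1 / d w := hQval
  have hQpos : 0 < Q := by
    rw [hQd]
    have h1 : (0:ℝ) < 1 / d v := one_div_pos.mpr (hdpos v)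
    have h2 : (0:ℝ) < 1 / d w := one_div_pos.mpr (hdpos w)
    linarith
  have hx : (1:ℝ) / d v ≤ 1 := by
    rw [div_le_one (hdpos v)]
    show (1:ℝ) ≤ (G.degree v : ℝ)
    exact_mod_cast hdegpos v
  have hy : (1:ℝ) / d w ≤ 1 := by
    rw [div_le_one (hdpos w)]
    show (1:ℝ) ≤ (G.degree w : ℝ)
    exact_mod_cast hdegpos w
  have hxy : 2 * (1 / (d v * d w)) = 2 * (1 / d v) * (1 / d w) := by
    field_simp
  have hQsq : Q * Q ≤ Q + 2 * (1 / (d v * d w)) := by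
    rw [hQd, hxy]
    exact aux_arith _ _ (one_div_pos.mpr (hdpos v)) (one_div_pos.mpr (hdpos w)) hx hy
  have hfin : Q * Q ≤ lam * Q := le_trans hQsq hRay
  exact le_of_mul_le_mul_right (by linarith [hfin]) hQpos
end

section
/- For a finite simple graph, Q equals the maximum over nonzero functions γ : E → ℝ of the quotient (∑_{v∈V} (1/deg v)·|∑_{e: v is input of e} γ(e) − ∑_{e: v is output of e} γ(e)|) / (∑_{e∈E} |γ(e)|), where Q := max over edges {v,w} of (1/deg(v) + 1/deg(w)). -/
open Finset

theorem stmt1 {V : Type*} [Fintype V] [DecidableEq V] (G : SimpleGraph V)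
    [DecidableRel G.Adj] (hiso : ∀ v : V, 0 < G.degree v)
    -- a fixed orientation: each edge is an ordered pair (input, output)
    (o : Sym2 V → V × V) (ho : ∀ e ∈ G.edgeFinset, s((o e).1, (o e).2) = e)
    (Q : ℝ)
    (hQ : IsGreatest {x : ℝ | ∃ v w : V, G.Adj v w ∧
      x = 1 / (G.degree v : ℝ) + 1 / (G.degree w : ℝ)} Q) :
    IsGreatest {x : ℝ | ∃ γ : Sym2 V → ℝ, (∃ e ∈ G.edgeFinset, γ e ≠ 0) ∧
      x = (∑ v : V, (1 / (G.degree v : ℝ)) *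
            |∑ e ∈ G.edgeFinset,
              ((if (o e).1 = v then γ e else 0) - (if (o e).2 = v then γ e else 0))|) /
          (∑ e ∈ G.edgeFinset, |γ e|)} Q := by
  obtain ⟨⟨v0, w0, hadj0, hQeq⟩, hub⟩ := hQ
  have hdeg : ∀ v : V, (0:ℝ) < G.degree v := fun v => by exact_mod_cast hiso v
  constructor
  · -- membership: take the indicator of an optimal edge
    have hE0 : s(v0, w0) ∈ G.edgeFinset := by
      simp [SimpleGraph.mem_edgeFinset, hadj0]
    refine ⟨fun e => if e = s(v0, w0) then 1 else 0, ⟨s(v0, w0), hE0, by simp⟩, ?_⟩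
    have hoE := ho _ hE0
    set a := (o s(v0, w0)).1 with ha
    set b := (o s(v0, w0)).2 with hb
    have hab : (a = v0 ∧ b = w0) ∨ (a = w0 ∧ b = v0) := Sym2.eq_iff.mp hoE
    have hne : a ≠ b := by
      rcases hab with ⟨h1, h2⟩ | ⟨h1, h2⟩ <;> rw [h1, h2]
      · exact hadj0.ne
      · exact hadj0.ne'
    -- inner sum computation
    have hinner : ∀ v : V, (∑ e ∈ G.edgeFinset,
        ((if (o e).1 = v then (if e = s(v0, w0) then (1:ℝ) else 0) else 0)
          - (if (o e).2 = v then (if e = s(v0, w0) then (1:ℝ) else 0) else 0)))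
        = (if a = v then (1:ℝ) else 0) - (if b = v then (1:ℝ) else 0) := by
      intro v
      rw [Finset.sum_eq_single_of_mem (s(v0, w0)) hE0]
      · simp [← ha, ← hb]
      · intro e _ hne'
        simp [hne']
    have hden : (∑ e ∈ G.edgeFinset, |if e = s(v0, w0) then (1:ℝ) else 0|) = 1 := by
      have : ∀ e : Sym2 V, |if e = s(v0, w0) then (1:ℝ) else 0|
          = if e = s(v0, w0) then (1:ℝ) else 0 := by
        intro e; split_ifs <;> simp
      rw [Finset.sum_congr rfl fun e _ => this e, Finset.sum_ite_eq' _ _ (fun _ => (1:ℝ))]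
      simp [hE0]
    have hnum : (∑ v : V, (1 / (G.degree v : ℝ)) *
        |(if a = v then (1:ℝ) else 0) - (if b = v then (1:ℝ) else 0)|)
        = 1 / (G.degree a : ℝ) + 1 / (G.degree b : ℝ) := by
      have : ∀ v : V, (1 / (G.degree v : ℝ)) *
          |(if a = v then (1:ℝ) else 0) - (if b = v then (1:ℝ) else 0)|
          = (if a = v then 1 / (G.degree a : ℝ) else 0)
            + (if b = v then 1 / (G.degree b : ℝ) else 0) := by
        intro v
        by_cases h1 : a = v <;> by_cases h2 : b = v
        · exact absurd (h1.trans h2.symm) hne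
        · rw [← h1]; simp [h2, ← h1, Ne.symm hne]
        · rw [← h2]; simp [h1, ← h2, hne]
        · simp [h1, h2]
      rw [Finset.sum_congr rfl fun v _ => this v, Finset.sum_add_distrib]
      simp
    simp only [hinner, hden, hnum, div_one]
    rcases hab with ⟨h1, h2⟩ | ⟨h1, h2⟩ <;> rw [h1, h2, hQeq]
    · exact add_comm _ _
  · -- upper bound
    rintro x ⟨γ, ⟨e0, he0, hγ0⟩, rfl⟩
    have hDpos : 0 < ∑ e ∈ G.edgeFinset, |γ e| :=
      Finset.sum_pos' (fun e _ => abs_nonneg _) ⟨e0, he0, abs_pos.mpr hγ0⟩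
    rw [div_le_iff₀ hDpos]
    have hQnn : (0:ℝ) ≤ Q := by
      rw [hQeq]; positivity
    calc (∑ v : V, (1 / (G.degree v : ℝ)) *
            |∑ e ∈ G.edgeFinset,
              ((if (o e).1 = v then γ e else 0) - (if (o e).2 = v then γ e else 0))|)
        ≤ ∑ v : V, (1 / (G.degree v : ℝ)) * ∑ e ∈ G.edgeFinset,
            ((if (o e).1 = v then (1:ℝ) else 0) + (if (o e).2 = v then (1:ℝ) else 0)) * |γ e| := by
          refine Finset.sum_le_sum fun v _ => ?_
          refine mul_le_mul_of_nonneg_left ?_ (by positivity)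
          refine le_trans (Finset.abs_sum_le_sum_abs _ _) (Finset.sum_le_sum fun e _ => ?_)
          split_ifs <;> simp
      _ = ∑ e ∈ G.edgeFinset, (1 / (G.degree (o e).1 : ℝ) + 1 / (G.degree (o e).2 : ℝ)) * |γ e| := by
          simp_rw [Finset.mul_sum]
          rw [Finset.sum_comm]
          refine Finset.sum_congr rfl fun e _ => ?_
          have : ∀ v : V, (1 / (G.degree v : ℝ)) *
              (((if (o e).1 = v then (1:ℝ) else 0) + (if (o e).2 = v then (1:ℝ) else 0)) * |γ e|)
              = (if (o e).1 = v then (1 / (G.degree (o e).1 : ℝ)) * |γ e| else 0)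
                + (if (o e).2 = v then (1 / (G.degree (o e).2 : ℝ)) * |γ e| else 0) := by
            intro v
            by_cases h1 : (o e).1 = v <;> by_cases h2 : (o e).2 = v
            · subst h1; rw [← h2]; simp; ring
            · subst h1; simp [h2]
            · subst h2; simp [h1]
            · simp [h1, h2]
          rw [Finset.sum_congr rfl fun v _ => this v, Finset.sum_add_distrib]
          simp; ring
      _ ≤ ∑ e ∈ G.edgeFinset, Q * |γ e| := by
          refine Finset.sum_le_sum fun e he => ?_
          refine mul_le_mul_of_nonneg_right ?_ (abs_nonneg _)
          refine hub ⟨(o e).1, (o e).2, ?_, rfl⟩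
          exact (SimpleGraph.mem_edgeSet G).mp
            (by rw [ho e he]; exact SimpleGraph.mem_edgeFinset.mp he)
      _ = Q * ∑ e ∈ G.edgeFinset, |γ e| := by rw [← Finset.mul_sum]
end

section
/- For a finite simple graph, Q equals the maximum over nonempty bipartite subgraphs Γ̂ ⊆ Γ of (∑_{v∈V} deg_{Γ̂}(v)/deg_Γ(v)) / |E(Γ̂)|, where Q := max over edges {v,w} of (1/deg(v) + 1/deg(w)). -/
open Finset

lemma edge_sum_aux {V : Type*} [Fintype V] [DecidableEq V] (G : SimpleGraph V)
    [DecidableRel G.Adj] (a b : V) (hab : a ≠ b) :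
    ∑ v : V, (if v ∈ s(a, b) then (1 : ℝ) else 0) / (G.degree v : ℝ)
      = 1 / (G.degree a : ℝ) + 1 / (G.degree b : ℝ) := by
  have : ∀ v : V, (if v ∈ s(a, b) then (1 : ℝ) else 0) / (G.degree v : ℝ)
      = if v ∈ ({a, b} : Finset V) then 1 / (G.degree v : ℝ) else 0 := by
    intro v
    simp only [Sym2.mem_iff, Finset.mem_insert, Finset.mem_singleton]
    by_cases h : v = a ∨ v = b <;> simp [h]
  rw [Finset.sum_congr rfl fun v _ => this v, Finset.sum_ite_mem,
    Finset.univ_inter, Finset.sum_pair hab]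

theorem stmt2 {V : Type*} [Fintype V] [DecidableEq V] (G : SimpleGraph V)
    [DecidableRel G.Adj] (hiso : ∀ v : V, 0 < G.degree v)
    (Q : ℝ)
    (hQ : IsGreatest {x : ℝ | ∃ v w : V, G.Adj v w ∧
      x = 1 / (G.degree v : ℝ) + 1 / (G.degree w : ℝ)} Q) :
    IsGreatest {x : ℝ | ∃ F : Finset (Sym2 V), F ⊆ G.edgeFinset ∧ F.Nonempty ∧
      (∃ c : V → Bool, ∀ e ∈ F, ∀ v w : V, e = s(v, w) → c v ≠ c w) ∧
      x = (∑ v : V, ((F.filter (fun e => v ∈ e)).card : ℝ) / (G.degree v : ℝ)) /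
          (F.card : ℝ)} Q := by
  obtain ⟨⟨v, w, hvw, hQeq⟩, hub⟩ := hQ
  constructor
  · -- membership: the single edge s(v,w)
    refine ⟨{s(v, w)}, ?_, ⟨s(v, w), Finset.mem_singleton_self _⟩, ?_, ?_⟩
    · intro e he
      rw [Finset.mem_singleton] at he
      subst he
      simpa using hvw
    · refine ⟨fun u => decide (u = w), ?_⟩
      intro e he a b hab
      rw [Finset.mem_singleton] at he
      subst he
      rw [Sym2.eq_iff] at hab
      rcases hab with ⟨rfl, rfl⟩ | ⟨rfl, rfl⟩ <;> simp [hvw.ne, hvw.ne']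
    · have hfilt : ∀ u : V, ((({s(v, w)} : Finset (Sym2 V)).filter (fun e => u ∈ e)).card : ℝ)
          = if u ∈ s(v, w) then (1 : ℝ) else 0 := by
        intro u
        by_cases h : u ∈ s(v, w) <;> simp [Finset.filter_singleton, h]
      rw [Finset.sum_congr rfl fun u _ => by rw [hfilt u], edge_sum_aux G v w hvw.ne]
      simp [hQeq]
  · -- upper bound
    rintro x ⟨F, hF, hFne, -, rfl⟩
    have key : ∀ e ∈ F, ∑ u : V, (if u ∈ e then (1 : ℝ) else 0) / (G.degree u : ℝ) ≤ Q := by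
      intro e he
      induction e using Sym2.ind with
      | _ a b =>
        have hadj : G.Adj a b := by
          have := hF he
          rwa [SimpleGraph.mem_edgeFinset, SimpleGraph.mem_edgeSet] at this
        rw [edge_sum_aux G a b hadj.ne]
        exact hub ⟨a, b, hadj, rfl⟩
    have hsum : (∑ u : V, ((F.filter (fun e => u ∈ e)).card : ℝ) / (G.degree u : ℝ))
        = ∑ e ∈ F, ∑ u : V, (if u ∈ e then (1 : ℝ) else 0) / (G.degree u : ℝ) := by
      rw [Finset.sum_comm]
      refine Finset.sum_congr rfl fun u _ => ?_
      rw [Finset.card_filter]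
      push_cast
      rw [Finset.sum_div]
    have hle : (∑ u : V, ((F.filter (fun e => u ∈ e)).card : ℝ) / (G.degree u : ℝ))
        ≤ F.card * Q := by
      rw [hsum]
      calc ∑ e ∈ F, ∑ u : V, (if u ∈ e then (1 : ℝ) else 0) / (G.degree u : ℝ)
          ≤ ∑ e ∈ F, Q := Finset.sum_le_sum key
        _ = F.card * Q := by rw [Finset.sum_const, nsmul_eq_mul]
    have hcard : (0 : ℝ) < F.card := by
      exact_mod_cast Finset.card_pos.mpr hFne
    rw [div_le_iff₀ hcard]
    linarith [hle]
end

section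
/- For every finite simple graph on n vertices with largest normalized Laplacian eigenvalue λ_max, we have λ_max ≤ Q · τ, where Q := max over edges {v,w} of (1/deg(v)+1/deg(w)) and τ := max over edges {v,w} with deg(w) ≥ deg(v) of ((deg(w) − deg(v) + n)·deg(v))/(deg(v)+deg(w)). -/
lemma eigen_key {V : Type*} [Fintype V] [DecidableEq V] (G : SimpleGraph V)
    [DecidableRel G.Adj] (hiso : ∀ v : V, 0 < G.degree v) (lam : ℝ) (f : V → ℝ)
    (hf : (normLap G).mulVec f = lam • f) (x : V) :
    ∑ u ∈ G.neighborFinset x, f u = (1 - lam) * (G.degree x : ℝ) * f x := by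
  have hx := congr_fun hf x
  have hdx : (0:ℝ) < (G.degree x : ℝ) := by exact_mod_cast hiso x
  have hsum : ∑ u, (if G.Adj x u then (1:ℝ)/(G.degree x : ℝ) else 0) * f u
      = (∑ u ∈ G.neighborFinset x, f u) / (G.degree x : ℝ) := by
    rw [SimpleGraph.neighborFinset_eq_filter, Finset.sum_filter, Finset.sum_div]
    refine Finset.sum_congr rfl fun u _ => ?_
    split_ifs <;> simp [div_eq_mul_inv, mul_comm]
  rw [Matrix.mulVec, Pi.smul_apply, smul_eq_mul] at hx
  simp only [normLap, dotProduct, Matrix.sub_apply, Matrix.one_apply,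
    Matrix.of_apply, sub_mul, Finset.sum_sub_distrib] at hx
  rw [hsum] at hx
  have h1 : ∑ u, (if x = u then (1:ℝ) else 0) * f u = f x := by simp
  rw [h1] at hx
  have h2 : (∑ u ∈ G.neighborFinset x, f u) / (G.degree x : ℝ) = (1 - lam) * f x := by
    linarith
  rw [div_eq_iff (ne_of_gt hdx)] at h2
  linear_combination h2

lemma edge_bound {V : Type*} [Fintype V] [DecidableEq V] (G : SimpleGraph V)
    [DecidableRel G.Adj] (hiso : ∀ v : V, 0 < G.degree v)
    (n : ℕ) (hn : n = Fintype.card V) (lam : ℝ) (f : V → ℝ) (v : V)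
    (key : ∀ x, ∑ u ∈ G.neighborFinset x, f u = (1 - lam) * (G.degree x : ℝ) * f x)
    (hmax : ∀ u, |f u| ≤ f v) (hpos : 0 < f v) (hlam : 1 < lam) :
    ∃ a b, G.Adj a b ∧ G.degree a ≤ G.degree b ∧
      lam * (G.degree b : ℝ) ≤ (n : ℝ) - (G.degree a : ℝ) + (G.degree b : ℝ) := by
  have hNv : (G.neighborFinset v).Nonempty := by
    rw [← Finset.card_pos, G.card_neighborFinset_eq_degree]; exact hiso v
  obtain ⟨w, hwmem, hwmin⟩ := Finset.exists_min_image (G.neighborFinset v) f hNv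
  have hadj : G.Adj v w := by rwa [SimpleGraph.mem_neighborFinset] at hwmem
  set M := f v with hM
  set m := -(f w) with hm
  have hdv : (0:ℝ) < (G.degree v : ℝ) := by exact_mod_cast hiso v
  have hdw : (0:ℝ) < (G.degree w : ℝ) := by exact_mod_cast hiso w
  have sum1 : ∑ u ∈ G.neighborFinset v, (f u - f w)
      = (G.degree v : ℝ) * (m - (lam - 1) * M) := by
    rw [Finset.sum_sub_distrib, key v, Finset.sum_const, nsmul_eq_mul,
      G.card_neighborFinset_eq_degree]
    rw [hm]; ring
  have pos1 : ∀ u ∈ G.neighborFinset v, (0:ℝ) ≤ f u - f w :=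
    fun u hu => sub_nonneg.2 (hwmin u hu)
  have sum2 : ∑ u ∈ G.neighborFinset w, (M - f u)
      = (G.degree w : ℝ) * (M - (lam - 1) * m) := by
    rw [Finset.sum_sub_distrib, key w, Finset.sum_const, nsmul_eq_mul,
      G.card_neighborFinset_eq_degree]
    rw [hm]; ring
  have pos2 : ∀ u ∈ G.neighborFinset w, (0:ℝ) ≤ M - f u :=
    fun u _ => sub_nonneg.2 (le_trans (le_abs_self _) (hmax u))
  have hA : (0:ℝ) ≤ m - (lam - 1) * M := by
    have h := Finset.sum_nonneg pos1
    rw [sum1] at h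
    nlinarith
  have hB : (0:ℝ) ≤ M - (lam - 1) * m := by
    have h := Finset.sum_nonneg pos2
    rw [sum2] at h
    nlinarith
  have hm0 : 0 < m := by nlinarith
  have hMm : (0:ℝ) < M + m := by linarith
  set S := G.neighborFinset v ∩ G.neighborFinset w with hS
  have hsub : (S.card : ℝ) * (M + m)
      ≤ (G.degree v : ℝ) * (m - (lam - 1) * M) + (G.degree w : ℝ) * (M - (lam - 1) * m) := by
    have e1 : ∑ u ∈ S, (f u - f w) ≤ ∑ u ∈ G.neighborFinset v, (f u - f w) :=
      Finset.sum_le_sum_of_subset_of_nonneg (Finset.inter_subset_left)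
        (fun u hu _ => pos1 u hu)
    have e2 : ∑ u ∈ S, (M - f u) ≤ ∑ u ∈ G.neighborFinset w, (M - f u) :=
      Finset.sum_le_sum_of_subset_of_nonneg (Finset.inter_subset_right)
        (fun u hu _ => pos2 u hu)
    have e3 : ∑ u ∈ S, ((f u - f w) + (M - f u)) = (S.card : ℝ) * (M + m) := by
      have : ∀ u ∈ S, (f u - f w) + (M - f u) = M + m := by intro u _; rw [hm]; ring
      rw [Finset.sum_congr rfl this, Finset.sum_const, nsmul_eq_mul]
    rw [Finset.sum_add_distrib] at e3
    rw [sum1] at e1; rw [sum2] at e2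
    linarith
  have hcardS : G.degree v + G.degree w ≤ n + S.card := by
    have h1 : (G.neighborFinset v ∪ G.neighborFinset w).card + S.card
        = G.degree v + G.degree w := by
      rw [hS, Finset.card_union_add_card_inter, G.card_neighborFinset_eq_degree,
        G.card_neighborFinset_eq_degree]
    have h2 : (G.neighborFinset v ∪ G.neighborFinset w).card ≤ Fintype.card V :=
      Finset.card_le_univ _
    omega
  have hcardS' : (G.degree v : ℝ) + (G.degree w : ℝ) ≤ (n : ℝ) + (S.card : ℝ) := by
    exact_mod_cast hcardS
  rcases le_total (G.degree v) (G.degree w) with hle | hle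
  · refine ⟨v, w, hadj, hle, ?_⟩
    have hcast : (G.degree v : ℝ) ≤ (G.degree w : ℝ) := by exact_mod_cast hle
    have h4 : (S.card : ℝ) * (M + m) ≤ ((2 - lam) * (G.degree w : ℝ)) * (M + m) := by
      nlinarith [mul_nonneg (sub_nonneg.2 hcast) hA]
    have h5 : (S.card : ℝ) ≤ (2 - lam) * (G.degree w : ℝ) :=
      le_of_mul_le_mul_right h4 hMm
    linarith
  · refine ⟨w, v, hadj.symm, hle, ?_⟩
    have hcast : (G.degree w : ℝ) ≤ (G.degree v : ℝ) := by exact_mod_cast hle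
    have h4 : (S.card : ℝ) * (M + m) ≤ ((2 - lam) * (G.degree v : ℝ)) * (M + m) := by
      nlinarith [mul_nonneg (sub_nonneg.2 hcast) hB]
    have h5 : (S.card : ℝ) ≤ (2 - lam) * (G.degree v : ℝ) :=
      le_of_mul_le_mul_right h4 hMm
    linarith

theorem stmt3 {V : Type*} [Fintype V] [DecidableEq V] (G : SimpleGraph V)
    [DecidableRel G.Adj] (hiso : ∀ v : V, 0 < G.degree v)
    (n : ℕ) (hn : n = Fintype.card V) (Q tau lam : ℝ)
    (hQ : IsGreatest {x : ℝ | ∃ v w : V, G.Adj v w ∧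
      x = 1 / (G.degree v : ℝ) + 1 / (G.degree w : ℝ)} Q)
    (htau : IsGreatest {x : ℝ | ∃ v w : V, G.Adj v w ∧ G.degree v ≤ G.degree w ∧
      x = (((G.degree w : ℝ) - (G.degree v : ℝ) + (n : ℝ)) * (G.degree v : ℝ)) /
          ((G.degree v : ℝ) + (G.degree w : ℝ))} tau)
    (hlam : IsGreatest
      {μ : ℝ | ∃ f : V → ℝ, f ≠ 0 ∧ (normLap G).mulVec f = μ • f} lam) :
    lam ≤ Q * tau := by
  classical
  obtain ⟨f, hf0, hf⟩ := hlam.1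
  obtain ⟨u0, hu0⟩ := Function.ne_iff.mp hf0
  have hu0' : f u0 ≠ 0 := hu0
  have hedge : ∃ a b, G.Adj a b ∧ G.degree a ≤ G.degree b ∧
      lam * (G.degree b : ℝ) ≤ (n : ℝ) - (G.degree a : ℝ) + (G.degree b : ℝ) := by
    rcases le_or_gt lam 1 with hl | hl
    · -- trivial case: any edge works
      have hNv : (G.neighborFinset u0).Nonempty := by
        rw [← Finset.card_pos, G.card_neighborFinset_eq_degree]; exact hiso u0
      obtain ⟨w0, hw0⟩ := hNv
      have hadj : G.Adj u0 w0 := by rwa [SimpleGraph.mem_neighborFinset] at hw0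
      have hd1 : G.degree u0 < n := by rw [hn]; exact G.degree_lt_card_verts u0
      have hd2 : G.degree w0 < n := by rw [hn]; exact G.degree_lt_card_verts w0
      rcases le_total (G.degree u0) (G.degree w0) with hle | hle
      · refine ⟨u0, w0, hadj, hle, ?_⟩
        have h1 : (G.degree u0 : ℝ) < n := by exact_mod_cast hd1
        have h2 : (0:ℝ) < G.degree w0 := by exact_mod_cast hiso w0
        nlinarith
      · refine ⟨w0, u0, hadj.symm, hle, ?_⟩
        have h1 : (G.degree w0 : ℝ) < n := by exact_mod_cast hd2
        have h2 : (0:ℝ) < G.degree u0 := by exact_mod_cast hiso u0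
        nlinarith
    · -- main case
      obtain ⟨v, -, hv⟩ := Finset.exists_max_image Finset.univ (fun u => |f u|)
        ⟨u0, Finset.mem_univ u0⟩
      have hv' : ∀ u, |f u| ≤ |f v| := fun u => hv u (Finset.mem_univ u)
      have hvpos : 0 < |f v| := lt_of_lt_of_le (abs_pos.2 hu0') (hv' u0)
      have key := eigen_key G hiso lam f hf
      rcases lt_or_ge 0 (f v) with hfv | hfv
      · have hmax : ∀ u, |f u| ≤ f v := by
          intro u; rw [← abs_of_pos hfv]; exact hv' u
        exact edge_bound G hiso n hn lam f v key hmax hfv hl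
      · have hfvne : f v ≠ 0 := fun h => by
          rw [h, abs_zero] at hvpos; exact lt_irrefl 0 hvpos
        have hfvneg : f v < 0 := lt_of_le_of_ne hfv hfvne
        have key' : ∀ x, ∑ u ∈ G.neighborFinset x, (-f) u
            = (1 - lam) * (G.degree x : ℝ) * (-f) x := by
          intro x
          simp only [Pi.neg_apply]
          rw [Finset.sum_neg_distrib, key x]; ring
        have hmax' : ∀ u, |(-f) u| ≤ (-f) v := by
          intro u
          rw [Pi.neg_apply, abs_neg, Pi.neg_apply, ← abs_of_neg hfvneg]
          exact hv' u
        have hfvpos' : 0 < (-f) v := by simp only [Pi.neg_apply]; linarith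
        exact edge_bound G hiso n hn lam (-f) v key' hmax' hfvpos' hl
  obtain ⟨a, b, hab, hle, hbound⟩ := hedge
  have hda : (0:ℝ) < (G.degree a : ℝ) := by exact_mod_cast hiso a
  have hdb : (0:ℝ) < (G.degree b : ℝ) := by exact_mod_cast hiso b
  have hcast : (G.degree a : ℝ) ≤ (G.degree b : ℝ) := by exact_mod_cast hle
  have hQ2 : 1 / (G.degree a : ℝ) + 1 / (G.degree b : ℝ) ≤ Q := hQ.2 ⟨a, b, hab, rfl⟩
  have ht2 : (((G.degree b : ℝ) - (G.degree a : ℝ) + (n : ℝ)) * (G.degree a : ℝ)) /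
      ((G.degree a : ℝ) + (G.degree b : ℝ)) ≤ tau := htau.2 ⟨a, b, hab, hle, rfl⟩
  have hn0 : (0:ℝ) ≤ (n:ℝ) := by positivity
  have htnn : (0:ℝ) ≤ (((G.degree b : ℝ) - (G.degree a : ℝ) + (n : ℝ)) * (G.degree a : ℝ)) /
      ((G.degree a : ℝ) + (G.degree b : ℝ)) := by
    apply div_nonneg
    · apply mul_nonneg (by linarith) hda.le
    · linarith
  have hQnn : (0:ℝ) ≤ Q := le_trans (by positivity) hQ2
  calc lam ≤ ((n : ℝ) - (G.degree a : ℝ) + (G.degree b : ℝ)) / (G.degree b : ℝ) := by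
        rw [le_div_iff₀ hdb]; linarith
    _ = (1 / (G.degree a : ℝ) + 1 / (G.degree b : ℝ)) *
        ((((G.degree b : ℝ) - (G.degree a : ℝ) + (n : ℝ)) * (G.degree a : ℝ)) /
          ((G.degree a : ℝ) + (G.degree b : ℝ))) := by
        field_simp
        ring
    _ ≤ Q * tau := mul_le_mul hQ2 ht2 htnn hQnn
end

section
/- For every finite simple graph on n vertices, λ_max ≤ 2 − min over edges {v,w} of |N(v)∩N(w)| / max(deg v, deg w), where λ_max is the largest eigenvalue of the normalized Laplacian. -/
theorem stmt4 {V : Type*} [Fintype V] [DecidableEq V] (G : SimpleGraph V)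
    [DecidableRel G.Adj] (hiso : ∀ v : V, 0 < G.degree v)
    (m lam : ℝ)
    (hm : IsLeast {x : ℝ | ∃ v w : V, G.Adj v w ∧
      x = ((G.commonNeighbors v w).ncard : ℝ) /
          ((max (G.degree v) (G.degree w) : ℕ) : ℝ)} m)
    (hlam : IsGreatest
      {μ : ℝ | ∃ f : V → ℝ, f ≠ 0 ∧ (normLap G).mulVec f = μ • f} lam) :
    lam ≤ 2 - m := by
  classical
  obtain ⟨f, hf0, heq⟩ := hlam.1
  -- the eigen equation, pointwise
  have key : ∀ z : V, ∑ y ∈ G.neighborFinset z, f y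
      = (1 - lam) * (G.degree z : ℝ) * f z := by
    intro z
    have hz := congrFun heq z
    have hdz : (G.degree z : ℝ) ≠ 0 := by exact_mod_cast (hiso z).ne'
    rw [normLap, Matrix.sub_mulVec, Matrix.one_mulVec] at hz
    simp only [Pi.sub_apply, Pi.smul_apply, smul_eq_mul, Matrix.mulVec, dotProduct,
      Matrix.of_apply, ite_mul, zero_mul] at hz
    have hsum : (∑ y, if G.Adj z y then 1 / (G.degree z : ℝ) * f y else 0)
        = 1 / (G.degree z : ℝ) * ∑ y ∈ G.neighborFinset z, f y := by
      rw [Finset.mul_sum, SimpleGraph.neighborFinset_eq_filter, Finset.sum_filter]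
    rw [hsum] at hz
    field_simp at hz
    linarith
  -- choose a vertex maximizing |f|
  have hex : ∃ z : V, f z ≠ 0 := by
    by_contra hc
    push_neg at hc
    exact hf0 (funext fun z => hc z)
  obtain ⟨z0, hz0⟩ := hex
  obtain ⟨v, -, hv⟩ := Finset.exists_max_image (Finset.univ : Finset V) (fun z => |f z|)
      ⟨z0, Finset.mem_univ z0⟩
  have hfv : f v ≠ 0 := by
    intro h0
    have h1 := hv z0 (Finset.mem_univ z0)
    rw [h0] at h1
    simp only [abs_zero] at h1
    exact hz0 (abs_eq_zero.mp (le_antisymm h1 (abs_nonneg _)))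
  -- normalize
  set h : V → ℝ := fun z => f z / f v with hh
  have hkey : ∀ z : V, ∑ y ∈ G.neighborFinset z, h y
      = (1 - lam) * (G.degree z : ℝ) * h z := by
    intro z
    simp only [hh]
    rw [← Finset.sum_div, key z, mul_div_assoc]
  have hhv : h v = 1 := div_self hfv
  have hhle : ∀ z, |h z| ≤ 1 := by
    intro z
    simp only [hh]
    rw [abs_div, div_le_one (abs_pos.mpr hfv)]
    exact hv z (Finset.mem_univ z)
  -- choose a minimal neighbor
  have hNv : (G.neighborFinset v).Nonempty := by
    rw [← Finset.card_pos, SimpleGraph.card_neighborFinset_eq_degree]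
    exact hiso v
  obtain ⟨w, hwmem, hwmin⟩ := Finset.exists_min_image (G.neighborFinset v) h hNv
  have hadj : G.Adj v w := by rwa [SimpleGraph.mem_neighborFinset] at hwmem
  set C : Finset V := G.neighborFinset v ∩ G.neighborFinset w with hC
  -- the quantity m is at most c / D for this edge
  have hCncard : ((G.commonNeighbors v w).ncard : ℝ) = (C.card : ℝ) := by
    congr 1
    rw [hC]
    have : G.commonNeighbors v w = ↑(G.neighborFinset v ∩ G.neighborFinset w) := by
      ext x
      simp [SimpleGraph.commonNeighbors, SimpleGraph.mem_neighborFinset,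
        SimpleGraph.mem_neighborSet]
    rw [this, Set.ncard_coe_finset]
  have hmle : m ≤ (C.card : ℝ) / ((max (G.degree v) (G.degree w) : ℕ) : ℝ) := by
    have h1 := hm.2 ⟨v, w, hadj, rfl⟩
    rwa [hCncard] at h1
  -- real abbreviations
  set dv : ℝ := (G.degree v : ℝ) with hdv_def
  set dw : ℝ := (G.degree w : ℝ) with hdw_def
  set c : ℝ := (C.card : ℝ) with hc_def
  set D : ℝ := ((max (G.degree v) (G.degree w) : ℕ) : ℝ) with hD_def
  set u : ℝ := h w with hu_def
  set SC : ℝ := ∑ y ∈ C, h y with hSC_def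
  have hdv1 : 1 ≤ dv := by rw [hdv_def]; exact Nat.one_le_cast.mpr (hiso v)
  have hdw1 : 1 ≤ dw := by rw [hdw_def]; exact Nat.one_le_cast.mpr (hiso w)
  have hD : D = max dv dw := by rw [hD_def, hdv_def, hdw_def]; push_cast; rfl
  have hu_le : u ≤ 1 := (abs_le.mp (hhle w)).2
  have hu_ge : -1 ≤ u := (abs_le.mp (hhle w)).1
  -- subset facts
  have hCsubv : C ⊆ G.neighborFinset v := Finset.inter_subset_left
  have hCsubw : C ⊆ G.neighborFinset w := Finset.inter_subset_right
  have hwC : w ∉ C := fun hmem => (SimpleGraph.notMem_neighborFinset_self G w) (hCsubw hmem)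
  have hvC : v ∉ C := fun hmem => (SimpleGraph.notMem_neighborFinset_self G v) (hCsubv hmem)
  have hvNw : v ∈ G.neighborFinset w := by
    rw [SimpleGraph.mem_neighborFinset]; exact hadj.symm
  have hIv : insert w C ⊆ G.neighborFinset v := Finset.insert_subset hwmem hCsubv
  have hIw : insert v C ⊆ G.neighborFinset w := Finset.insert_subset hvNw hCsubw
  have hcdv : c + 1 ≤ dv := by
    have := Finset.card_le_card hIv
    rw [Finset.card_insert_of_notMem hwC, SimpleGraph.card_neighborFinset_eq_degree] at this
    rw [hc_def, hdv_def]
    exact_mod_cast this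
  -- inequality A1 : dv * u ≤ (1-lam)*dv
  have hA1 : dv * u ≤ (1 - lam) * dv := by
    have h1 := Finset.card_nsmul_le_sum (G.neighborFinset v) h u
      (fun y hy => hwmin y hy)
    rw [SimpleGraph.card_neighborFinset_eq_degree, nsmul_eq_mul, hkey v, hhv, mul_one] at h1
    exact h1
  have hmu1 : 1 + u ≤ 2 - lam := by
    have h2 : u * dv ≤ (1 - lam) * dv := by linarith [hA1]
    have h3 : u ≤ 1 - lam := le_of_mul_le_mul_right h2 (by linarith)
    linarith
  -- split the sum at v
  set kv : ℝ := ((G.neighborFinset v \ insert w C).card : ℝ) with hkv_def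
  have hkveq : kv = dv - c - 1 := by
    have h1 := Finset.card_sdiff_add_card_eq_card hIv
    rw [Finset.card_insert_of_notMem hwC, SimpleGraph.card_neighborFinset_eq_degree] at h1
    have : kv + (c + 1) = dv := by
      rw [hkv_def, hc_def, hdv_def]
      exact_mod_cast h1
    linarith
  have hA : (dv - c - 1) * u + (u + SC) ≤ (1 - lam) * dv := by
    have hsplit : ∑ y ∈ G.neighborFinset v, h y
        = (∑ y ∈ G.neighborFinset v \ insert w C, h y) + (u + SC) := by
      rw [← Finset.sum_sdiff hIv, Finset.sum_insert hwC]
    have hlow : kv * u ≤ ∑ y ∈ G.neighborFinset v \ insert w C, h y := by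
      have := Finset.card_nsmul_le_sum (G.neighborFinset v \ insert w C) h u
        (fun y hy => hwmin y (Finset.mem_sdiff.mp hy).1)
      rwa [nsmul_eq_mul] at this
    have e1 := hkey v
    rw [hhv, mul_one] at e1
    rw [← hkveq]
    linarith [hsplit ▸ e1]
  -- split the sum at w
  set kw : ℝ := ((G.neighborFinset w \ insert v C).card : ℝ) with hkw_def
  have hkweq : kw = dw - c - 1 := by
    have h1 := Finset.card_sdiff_add_card_eq_card hIw
    rw [Finset.card_insert_of_notMem hvC, SimpleGraph.card_neighborFinset_eq_degree] at h1
    have : kw + (c + 1) = dw := by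
      rw [hkw_def, hc_def, hdw_def]
      exact_mod_cast h1
    linarith
  have hB : (1 - lam) * dw * u ≤ (dw - c - 1) + (1 + SC) := by
    have hsplit : ∑ y ∈ G.neighborFinset w, h y
        = (∑ y ∈ G.neighborFinset w \ insert v C, h y) + (1 + SC) := by
      rw [← Finset.sum_sdiff hIw, Finset.sum_insert hvC, hhv]
    have hup : ∑ y ∈ G.neighborFinset w \ insert v C, h y ≤ kw := by
      have := Finset.sum_le_card_nsmul (G.neighborFinset w \ insert v C) h 1
        (fun y _ => (abs_le.mp (hhle y)).2)
      rwa [nsmul_eq_mul, mul_one] at this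
    have e1 := hkey w
    rw [← hkweq]
    linarith [hsplit ▸ e1]
  -- combined inequality
  have hcomb : c * (1 - u) + (1 + u) * (dv - dw) ≤ (2 - lam) * (dv - dw * u) := by
    linarith [hA, hB]
  -- conclude c / D ≤ 2 - lam
  have hc0 : 0 ≤ c := by rw [hc_def]; positivity
  have hDpos : 0 < D := by
    rw [hD]
    exact lt_of_lt_of_le zero_lt_one (le_trans hdv1 (le_max_left _ _))
  have hcD : c ≤ D := by
    rw [hD]
    exact le_trans (by linarith) (le_max_left _ _)
  have hgoal : c / D ≤ 2 - lam := by
    by_cases hcase : c / D ≤ 1 + u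
    · linarith
    · push_neg at hcase
      have hcD1 : c / D ≤ 1 := (div_le_one hDpos).mpr hcD
      have hu0 : u < 0 := by linarith
      have hmu0 : 0 ≤ 2 - lam := by linarith
      rw [div_le_iff₀ hDpos]
      rcases le_total dw dv with hle | hle
      · have hDeq : D = dv := by rw [hD, max_eq_left hle]
        rw [hDeq]
        have e1 : 0 ≤ (2 - lam) * ((-u) * (dv - dw)) :=
          mul_nonneg hmu0 (mul_nonneg (by linarith) (by linarith))
        have e2 : 0 ≤ (1 + u) * (dv - dw) :=
          mul_nonneg (by linarith) (by linarith)
        have e3 : c * (1 - u) ≤ ((2 - lam) * dv) * (1 - u) := by linarith [hcomb, e1, e2]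
        exact le_of_mul_le_mul_right e3 (by linarith)
      · have hDeq : D = dw := by rw [hD, max_eq_right hle]
        rw [hDeq]
        have e4 : (1 + u) * (dw - dv) ≤ (2 - lam) * (dw - dv) :=
          mul_le_mul_of_nonneg_right hmu1 (by linarith)
        have e5 : c * (1 - u) ≤ ((2 - lam) * dw) * (1 - u) := by linarith [hcomb, e4]
        exact le_of_mul_le_mul_right e5 (by linarith)
  linarith
end

section
/- Let Γ be a (k,d)-one-sided bipartite graph on n vertices with d ≥ n−k. Then the largest eigenvalue of the normalized Laplacian equals (d+k)/d. -/
/-- A `(k,d)`-one-sided bipartite graph: the vertex set splits as `V₁ ⊔ V₂` with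
`|V₂| = k`, every vertex of `V₁` adjacent to every vertex of `V₂`, no edges inside
`V₂`, and every vertex of `V₁` of degree `d`. -/
def IsOneSidedBipartite {V : Type*} [Fintype V] [DecidableEq V] (G : SimpleGraph V)
    [DecidableRel G.Adj] (V₁ V₂ : Finset V) (k d : ℕ) : Prop :=
  Disjoint V₁ V₂ ∧ V₁ ∪ V₂ = Finset.univ ∧ V₂.card = k ∧
  (∀ v ∈ V₁, ∀ w ∈ V₂, G.Adj v w) ∧
  (∀ v ∈ V₂, ∀ w ∈ V₂, ¬ G.Adj v w) ∧
  (∀ v ∈ V₁, G.degree v = d)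

set_option maxHeartbeats 1600000 in
theorem stmt10 {V : Type*} [Fintype V] [DecidableEq V] (G : SimpleGraph V)
    [DecidableRel G.Adj] (V₁ V₂ : Finset V) (n k d : ℕ)
    (hn : n = Fintype.card V) (hk : 0 < k) (hk2 : k ≤ n - 2)
    (hkd : k ≤ d) (hdn : d ≤ n - 1) (hd : n - k ≤ d)
    (hG : IsOneSidedBipartite G V₁ V₂ k d) :
    IsGreatest {μ : ℝ | ∃ f : V → ℝ, f ≠ 0 ∧ (normLap G).mulVec f = μ • f}
      (((d : ℝ) + (k : ℝ)) / (d : ℝ)) := by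
  obtain ⟨hdisj, huniv, hc2, hadj, hnon, hdeg⟩ := hG
  set m : ℕ := V₁.card with hm
  have hmem : ∀ v : V, v ∈ V₁ ∨ v ∈ V₂ := by
    intro v
    have : v ∈ V₁ ∪ V₂ := by rw [huniv]; exact Finset.mem_univ v
    exact Finset.mem_union.mp this
  have hnotboth : ∀ v ∈ V₂, v ∉ V₁ := fun v hv hv1 => (Finset.disjoint_left.mp hdisj hv1) hv
  have hcardsum : m + k = n := by
    rw [hn, ← Finset.card_univ, ← huniv, Finset.card_union_of_disjoint hdisj, hc2]
  have hm2 : 2 ≤ m := by omega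
  have hmd : m ≤ d := by omega
  have hdk : d - k ≤ m - 1 := by omega
  have hd0 : 0 < d := lt_of_lt_of_le hk hkd
  have hd0R : (0:ℝ) < (d:ℝ) := by exact_mod_cast hd0
  have hm0R : (0:ℝ) < (m:ℝ) := by exact_mod_cast (by omega : 0 < m)
  have hk0R : (0:ℝ) < (k:ℝ) := by exact_mod_cast hk
  have hmdR : (m:ℝ) ≤ (d:ℝ) := by exact_mod_cast hmd
  -- neighbor sets
  have hN2 : ∀ v ∈ V₂, G.neighborFinset v = V₁ := by
    intro v hv
    ext w
    simp only [SimpleGraph.mem_neighborFinset]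
    constructor
    · intro h
      rcases hmem w with h1 | h2
      · exact h1
      · exact absurd h (hnon v hv w h2)
    · intro h1
      exact (hadj w h1 v hv).symm
  have hdeg2 : ∀ v ∈ V₂, G.degree v = m := by
    intro v hv
    rw [← SimpleGraph.card_neighborFinset_eq_degree, hN2 v hv]
  have hNsplit : ∀ v ∈ V₁, G.neighborFinset v = (G.neighborFinset v ∩ V₁) ∪ V₂ := by
    intro v hv
    ext w
    simp only [Finset.mem_union, Finset.mem_inter]
    constructor
    · intro h
      rcases hmem w with h1 | h2
      · exact Or.inl ⟨h, h1⟩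
      · exact Or.inr h2
    · rintro (⟨h, _⟩ | h2)
      · exact h
      · exact (SimpleGraph.mem_neighborFinset G v w).mpr (hadj v hv w h2)
  have hdisjN : ∀ v : V, Disjoint (G.neighborFinset v ∩ V₁) V₂ :=
    fun v => Finset.disjoint_of_subset_left Finset.inter_subset_right hdisj
  have hN1card : ∀ v ∈ V₁, (G.neighborFinset v ∩ V₁).card = d - k := by
    intro v hv
    have h1 := Finset.card_union_of_disjoint (hdisjN v)
    have h2 := congrArg Finset.card (hNsplit v hv)
    rw [h1, SimpleGraph.card_neighborFinset_eq_degree, hdeg v hv, hc2] at h2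
    omega
  -- the complement-neighborhood inside V₁
  have hAbar : ∀ v ∈ V₁, V₁.filter (fun w => w ≠ v ∧ ¬ G.Adj v w)
      = V₁ \ insert v (G.neighborFinset v ∩ V₁) := by
    intro v hv
    ext w
    simp only [Finset.mem_filter, Finset.mem_sdiff, Finset.mem_insert, Finset.mem_inter,
      SimpleGraph.mem_neighborFinset]
    constructor
    · rintro ⟨hw, hne, hnadj⟩
      exact ⟨hw, by tauto⟩
    · rintro ⟨hw, h⟩
      push_neg at h
      exact ⟨hw, h.1, fun hadj' => (h.2 hadj') hw⟩
  have hsubins : ∀ v ∈ V₁, insert v (G.neighborFinset v ∩ V₁) ⊆ V₁ := by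
    intro v hv
    exact Finset.insert_subset hv Finset.inter_subset_right
  have hvnotmem : ∀ v : V, v ∉ G.neighborFinset v ∩ V₁ := by
    intro v hmemv
    exact (SimpleGraph.notMem_neighborFinset_self G v) (Finset.mem_inter.mp hmemv).1
  have hinscard : ∀ v ∈ V₁, (insert v (G.neighborFinset v ∩ V₁)).card = 1 + (d - k) := by
    intro v hv
    rw [Finset.card_insert_of_notMem (hvnotmem v), hN1card v hv]
    omega
  have hAbarcard : ∀ v ∈ V₁, (V₁.filter (fun w => w ≠ v ∧ ¬ G.Adj v w)).card
      = m - 1 - (d - k) := by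
    intro v hv
    rw [hAbar v hv, Finset.card_sdiff_of_subset (hsubins v hv), hinscard v hv]
    omega
  have hrcast : ((m - 1 - (d - k) : ℕ) : ℝ) = (m:ℝ) - 1 - ((d:ℝ) - (k:ℝ)) := by
    have h1 : (1:ℕ) ≤ m := by omega
    rw [Nat.cast_sub hdk, Nat.cast_sub h1, Nat.cast_sub hkd, Nat.cast_one]
  -- positivity of degrees
  have hdegpos : ∀ v : V, 0 < G.degree v := by
    intro v
    rcases hmem v with h | h
    · rw [hdeg v h]; exact hd0
    · rw [hdeg2 v h]; omega
  -- mulVec formula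
  have hmv : ∀ (f : V → ℝ) (v : V), (normLap G).mulVec f v
      = f v - (∑ w ∈ G.neighborFinset v, f w) / (G.degree v : ℝ) := by
    intro f v
    rw [normLap, Matrix.sub_mulVec, Matrix.one_mulVec]
    simp only [Pi.sub_apply]
    congr 1
    simp only [Matrix.mulVec, dotProduct, Matrix.of_apply, ite_mul, zero_mul]
    rw [← Finset.sum_filter, ← SimpleGraph.neighborFinset_eq_filter, ← Finset.mul_sum,
      one_div, inv_mul_eq_div]
  constructor
  · -- membership : explicit eigenvector
    refine ⟨fun v => if v ∈ V₁ then (k:ℝ) else -(d:ℝ), ?_, ?_⟩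
    · obtain ⟨v, hv⟩ : V₁.Nonempty := Finset.card_pos.mp (by omega)
      intro h0
      have h1 := congrFun h0 v
      simp only [if_pos hv, Pi.zero_apply] at h1
      exact hk0R.ne' h1
    · funext v
      rw [hmv, Pi.smul_apply, smul_eq_mul]
      rcases hmem v with hv | hv
      · have hsum : ∑ w ∈ G.neighborFinset v, (if w ∈ V₁ then (k:ℝ) else -(d:ℝ))
            = ((d:ℝ) - k) * k + (k:ℝ) * (-(d:ℝ)) := by
          rw [hNsplit v hv, Finset.sum_union (hdisjN v)]
          congr 1
          · rw [Finset.sum_congr rfl (fun w hw => if_pos (Finset.mem_inter.mp hw).2),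
              Finset.sum_const, hN1card v hv, nsmul_eq_mul, Nat.cast_sub hkd]
          · rw [Finset.sum_congr rfl (fun w hw => if_neg (hnotboth w hw)),
              Finset.sum_const, hc2, nsmul_eq_mul]
        rw [hsum, hdeg v hv, if_pos hv]
        field_simp
        try ring
      · have hsum : ∑ w ∈ G.neighborFinset v, (if w ∈ V₁ then (k:ℝ) else -(d:ℝ))
            = (m:ℝ) * k := by
          rw [hN2 v hv, Finset.sum_congr rfl (fun w hw => if_pos hw), Finset.sum_const,
            nsmul_eq_mul]
        rw [hsum, hdeg2 v hv, if_neg (hnotboth v hv)]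
        field_simp
        try ring
  · -- upper bound
    rintro μ ⟨f, hf0, hfeq⟩
    by_contra hcon
    push_neg at hcon
    set c : ℝ := 1 - μ with hcdef
    have hcd : c * d = d - μ * d := by rw [hcdef]; ring
    have hcdk : c * d + k < 0 := by
      have h := (div_lt_iff₀ hd0R).mp hcon
      linarith
    have hc0 : c < 0 := by nlinarith
    have heig : ∀ v, ∑ w ∈ G.neighborFinset v, f w = c * (G.degree v : ℝ) * f v := by
      intro v
      have h := congrFun hfeq v
      rw [hmv f v, Pi.smul_apply, smul_eq_mul] at h
      have hdv : (0:ℝ) < (G.degree v : ℝ) := by exact_mod_cast hdegpos v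
      have h2 : (∑ w ∈ G.neighborFinset v, f w) / (G.degree v : ℝ) = c * f v := by
        rw [hcdef]; linarith
      rw [div_eq_iff hdv.ne'] at h2
      rw [h2]; ring
    set S₁ : ℝ := ∑ v ∈ V₁, f v with hS₁
    set S₂ : ℝ := ∑ v ∈ V₂, f v with hS₂
    set A₁ : ℝ := ∑ v ∈ V₁, (f v)^2 with hA₁
    have hA1nn : 0 ≤ A₁ := Finset.sum_nonneg fun v _ => sq_nonneg _
    have h2 : ∀ v ∈ V₂, c * m * f v = S₁ := by
      intro v hv
      have h := heig v
      rw [hN2 v hv, hdeg2 v hv] at h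
      exact h.symm
    have hS2eq : c * m * S₂ = k * S₁ := by
      rw [hS₂, Finset.mul_sum, Finset.sum_congr rfl h2, Finset.sum_const, hc2, nsmul_eq_mul]
    have h1 : ∀ v ∈ V₁, ∑ w ∈ G.neighborFinset v ∩ V₁, f w = c * d * f v - S₂ := by
      intro v hv
      have h := heig v
      rw [hNsplit v hv, Finset.sum_union (hdisjN v), hdeg v hv, ← hS₂] at h
      linarith
    have hT : ∀ v ∈ V₁, ∑ w ∈ V₁.filter (fun w => w ≠ v ∧ ¬ G.Adj v w), f w
        = S₁ + S₂ - (c * d + 1) * f v := by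
      intro v hv
      have hsplit : ∑ w ∈ V₁ ∩ insert v (G.neighborFinset v ∩ V₁), f w
          + ∑ w ∈ V₁ \ insert v (G.neighborFinset v ∩ V₁), f w = S₁ :=
        Finset.sum_inter_add_sum_sdiff _ _ _
      have hintereq : V₁ ∩ insert v (G.neighborFinset v ∩ V₁)
          = insert v (G.neighborFinset v ∩ V₁) :=
        Finset.inter_eq_right.mpr (hsubins v hv)
      rw [hintereq, Finset.sum_insert (hvnotmem v), h1 v hv] at hsplit
      rw [hAbar v hv]
      linarith
    set rr : ℝ := (m:ℝ) - 1 - ((d:ℝ) - (k:ℝ)) with hrr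
    have hsym : ∀ v ∈ V₁, ∀ w ∈ V₁, ((w ≠ v ∧ ¬ G.Adj v w) ↔ (v ≠ w ∧ ¬ G.Adj w v)) := by
      intro v _ w _
      constructor
      · rintro ⟨h1', h2'⟩; exact ⟨h1'.symm, fun h => h2' h.symm⟩
      · rintro ⟨h1', h2'⟩; exact ⟨h1'.symm, fun h => h2' h.symm⟩
    have hswap : ∑ v ∈ V₁, ∑ w ∈ V₁.filter (fun w => w ≠ v ∧ ¬ G.Adj v w), (f w)^2
        = rr * A₁ := by
      have e1 : ∑ v ∈ V₁, ∑ w ∈ V₁.filter (fun w => w ≠ v ∧ ¬ G.Adj v w), (f w)^2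
          = ∑ v ∈ V₁, ∑ w ∈ V₁, (if w ≠ v ∧ ¬ G.Adj v w then (f w)^2 else 0) :=
        Finset.sum_congr rfl fun v _ => Finset.sum_filter _ _
      rw [e1, Finset.sum_comm]
      have e2 : ∀ w ∈ V₁, ∑ v ∈ V₁, (if w ≠ v ∧ ¬ G.Adj v w then (f w)^2 else 0)
          = rr * (f w)^2 := by
        intro w hw
        have e3 : ∑ v ∈ V₁, (if w ≠ v ∧ ¬ G.Adj v w then (f w)^2 else 0)
            = ∑ v ∈ V₁.filter (fun v => v ≠ w ∧ ¬ G.Adj w v), (f w)^2 := by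
          rw [Finset.sum_filter]
          refine Finset.sum_congr rfl fun v hv => ?_
          congr 1
          simp only [eq_iff_iff]
          exact hsym v hv w hw
        rw [e3, Finset.sum_const, hAbarcard w hw, nsmul_eq_mul, hrcast]
      rw [Finset.sum_congr rfl e2, ← Finset.mul_sum]
    have hdiag : ∑ v ∈ V₁, ∑ w ∈ V₁.filter (fun w => w ≠ v ∧ ¬ G.Adj v w), (f v)^2
        = rr * A₁ := by
      have e2 : ∀ v ∈ V₁, ∑ w ∈ V₁.filter (fun w => w ≠ v ∧ ¬ G.Adj v w), (f v)^2
          = rr * (f v)^2 := by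
        intro v hv
        rw [Finset.sum_const, hAbarcard v hv, nsmul_eq_mul, hrcast]
      rw [Finset.sum_congr rfl e2, ← Finset.mul_sum]
    have hX : ∑ v ∈ V₁, f v * (∑ w ∈ V₁.filter (fun w => w ≠ v ∧ ¬ G.Adj v w), f w)
        ≤ rr * A₁ := by
      have hb : ∀ v ∈ V₁, f v * (∑ w ∈ V₁.filter (fun w => w ≠ v ∧ ¬ G.Adj v w), f w)
          ≤ ∑ w ∈ V₁.filter (fun w => w ≠ v ∧ ¬ G.Adj v w), ((f v)^2 + (f w)^2) / 2 := by
        intro v _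
        rw [Finset.mul_sum]
        refine Finset.sum_le_sum fun w _ => ?_
        nlinarith [sq_nonneg (f v - f w)]
      have e4 : ∑ v ∈ V₁, ∑ w ∈ V₁.filter (fun w => w ≠ v ∧ ¬ G.Adj v w),
          ((f v)^2 + (f w)^2) / 2 = rr * A₁ := by
        have e5 : ∀ v ∈ V₁, ∑ w ∈ V₁.filter (fun w => w ≠ v ∧ ¬ G.Adj v w),
            ((f v)^2 + (f w)^2) / 2
            = (∑ w ∈ V₁.filter (fun w => w ≠ v ∧ ¬ G.Adj v w), (f v)^2) / 2
            + (∑ w ∈ V₁.filter (fun w => w ≠ v ∧ ¬ G.Adj v w), (f w)^2) / 2 := by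
          intro v _
          rw [← Finset.sum_div, Finset.sum_add_distrib, add_div]
        rw [Finset.sum_congr rfl e5, Finset.sum_add_distrib, ← Finset.sum_div,
          ← Finset.sum_div, hswap, hdiag]
        ring
      calc ∑ v ∈ V₁, f v * (∑ w ∈ V₁.filter (fun w => w ≠ v ∧ ¬ G.Adj v w), f w)
          ≤ ∑ v ∈ V₁, ∑ w ∈ V₁.filter (fun w => w ≠ v ∧ ¬ G.Adj v w),
            ((f v)^2 + (f w)^2) / 2 := Finset.sum_le_sum hb
        _ = rr * A₁ := e4
    have hexp : ∑ v ∈ V₁, f v * (∑ w ∈ V₁.filter (fun w => w ≠ v ∧ ¬ G.Adj v w), f w)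
        = (S₁ + S₂) * S₁ - (c * d + 1) * A₁ := by
      calc ∑ v ∈ V₁, f v * (∑ w ∈ V₁.filter (fun w => w ≠ v ∧ ¬ G.Adj v w), f w)
          = ∑ v ∈ V₁, ((S₁ + S₂) * f v - (c * d + 1) * (f v)^2) :=
            Finset.sum_congr rfl fun v hv => by rw [hT v hv]; ring
        _ = (S₁ + S₂) * S₁ - (c * d + 1) * A₁ := by
            rw [Finset.sum_sub_distrib, ← Finset.mul_sum, ← Finset.mul_sum, ← hS₁, ← hA₁]
    have hCS : S₁^2 ≤ (m:ℝ) * A₁ := by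
      rw [hS₁, hA₁, hm]
      exact sq_sum_le_card_mul_sum_sq
    clear_value c S₁ S₂ A₁ rr
    have hstar : S₁^2 + S₂ * S₁ ≤ (c * d + 1 + rr) * A₁ := by rw [hexp] at hX; linarith [hX]
    have hcoef : c * d + 1 + rr < 0 := by rw [hrr]; linarith
    by_cases hS1z : S₁ = 0
    · -- then f = 0, contradiction
      have hS20 : S₂ = 0 := by
        have h := hS2eq
        rw [hS1z, mul_zero] at h
        have hcm : c * (m:ℝ) ≠ 0 := (mul_neg_of_neg_of_pos hc0 hm0R).ne
        rcases mul_eq_zero.mp h with h' | h'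
        · exact absurd h' hcm
        · exact h'
      have hA10 : A₁ = 0 := by
        rw [hS1z, hS20] at hstar
        nlinarith [hstar, hA1nn, hcoef]
      apply hf0
      funext v
      show f v = 0
      rcases hmem v with hv | hv
      · rw [hA₁] at hA10
        have h := (Finset.sum_eq_zero_iff_of_nonneg
          (fun i _ => sq_nonneg (f i))).mp hA10 v hv
        exact sq_eq_zero_iff.mp h
      · have h := h2 v hv
        rw [hS1z] at h
        have hcm : c * (m:ℝ) ≠ 0 := (mul_neg_of_neg_of_pos hc0 hm0R).ne
        rcases mul_eq_zero.mp h with h' | h'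
        · rcases mul_eq_zero.mp h' with h'' | h''
          · exact absurd (mul_eq_zero.mpr (Or.inl h'')) hcm
          · exact absurd (mul_eq_zero.mpr (Or.inr h'')) hcm
        · exact h'
    · -- main contradiction
      have hs : 0 < S₁^2 := by positivity
      have hcm : c * (m:ℝ) < 0 := mul_neg_of_neg_of_pos hc0 hm0R
      have key1 : (c * m) * ((c * d + 1 + rr) * A₁) ≤ (c * m) * (S₁^2 + S₂ * S₁) :=
        mul_le_mul_of_nonpos_left hstar hcm.le
      have key2 : (c * (m:ℝ)) * (S₁^2 + S₂ * S₁) = c * m * S₁^2 + k * S₁^2 := by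
        linear_combination S₁ * hS2eq
      have hQ : 0 < c * (c * d + 1 + rr) := mul_pos_of_neg_of_neg hc0 hcoef
      have key4 : (c * (c * d + 1 + rr)) * S₁^2 ≤ (c * (c * d + 1 + rr)) * ((m:ℝ) * A₁) :=
        mul_le_mul_of_nonneg_left hCS hQ.le
      have key5 : (c * (c * d + 1 + rr)) * ((m:ℝ) * A₁)
          = (c * m) * ((c * d + 1 + rr) * A₁) := by ring
      have key6 : (c * (c * d + 1 + rr)) * S₁^2 ≤ c * m * S₁^2 + k * S₁^2 := by
        rw [key5] at key4
        rw [key2] at key1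
        linarith
      have hprod : 0 < (c * d + k) * (c - 1) :=
        mul_pos_of_neg_of_neg hcdk (by linarith)
      have hfin : 0 < (c * d + k) * (c - 1) * S₁^2 := mul_pos hprod hs
      rw [hrr] at key6
      nlinarith [key6, hfin]
end

section
/- Let Γ be a (k,d)-one-sided bipartite graph on n vertices with d < n−k. Then the largest eigenvalue λ_max of the normalized Laplacian satisfies (d+k)/d ≤ λ_max ≤ n/d. -/
lemma mulVec_normLap {V : Type*} [Fintype V] [DecidableEq V] (G : SimpleGraph V)
    [DecidableRel G.Adj] (f : V → ℝ) (v : V) :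
    (normLap G).mulVec f v = f v - (∑ w ∈ G.neighborFinset v, f w) / (G.degree v : ℝ) := by
  simp only [normLap, Matrix.sub_mulVec, Pi.sub_apply, Matrix.one_mulVec]
  congr 1
  rw [Matrix.mulVec, dotProduct, Finset.sum_div,
    SimpleGraph.neighborFinset_eq_filter, Finset.sum_filter]
  apply Finset.sum_congr rfl
  intro w _
  by_cases h : G.Adj v w <;> simp [h] <;> ring

set_option maxHeartbeats 1000000 in
theorem stmt11 {V : Type*} [Fintype V] [DecidableEq V] (G : SimpleGraph V)
    [DecidableRel G.Adj] (V₁ V₂ : Finset V) (n k d : ℕ)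
    (hn : n = Fintype.card V) (hk : 0 < k) (hk2 : k ≤ n - 2)
    (hkd : k ≤ d) (hdn : d ≤ n - 1) (hd : d < n - k)
    (hG : IsOneSidedBipartite G V₁ V₂ k d) (lam : ℝ)
    (hlam : IsGreatest
      {μ : ℝ | ∃ f : V → ℝ, f ≠ 0 ∧ (normLap G).mulVec f = μ • f} lam) :
    ((d : ℝ) + (k : ℝ)) / (d : ℝ) ≤ lam ∧ lam ≤ (n : ℝ) / (d : ℝ) := by
  obtain ⟨hdisj, huniv, hV2card, hadj, hno, hdeg⟩ := hG
  have hd0 : 0 < d := lt_of_lt_of_le hk hkd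
  set m := V₁.card with hm
  -- every vertex is in V₁ or V₂
  have hmem : ∀ v : V, v ∈ V₁ ∨ v ∈ V₂ := by
    intro v
    have : v ∈ V₁ ∪ V₂ := huniv ▸ Finset.mem_univ v
    exact Finset.mem_union.mp this
  have hnm : n = m + k := by
    rw [hn, ← Finset.card_univ, ← huniv, Finset.card_union_of_disjoint hdisj, hV2card]
  have hdm : d < m := by omega
  have hm0 : 0 < m := lt_trans hd0 hdm
  -- neighbor finset of a vertex of V₂ is V₁
  have hnbr2 : ∀ v ∈ V₂, G.neighborFinset v = V₁ := by
    intro v hv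
    ext w
    simp only [SimpleGraph.mem_neighborFinset]
    constructor
    · intro h
      rcases hmem w with hw | hw
      · exact hw
      · exact absurd h (hno v hv w hw)
    · intro hw
      exact (hadj w hw v hv).symm
  have hdeg2 : ∀ v ∈ V₂, G.degree v = m := by
    intro v hv
    rw [← SimpleGraph.card_neighborFinset_eq_degree, hnbr2 v hv]
  -- structure of neighbor finset of a vertex of V₁
  have hnbr1 : ∀ v ∈ V₁, G.neighborFinset v = (G.neighborFinset v ∩ V₁) ∪ V₂ := by
    intro v hv
    ext w
    simp only [Finset.mem_union, Finset.mem_inter, SimpleGraph.mem_neighborFinset]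
    constructor
    · intro h
      rcases hmem w with hw | hw
      · exact Or.inl ⟨h, hw⟩
      · exact Or.inr hw
    · rintro (⟨h, _⟩ | hw)
      · exact h
      · exact hadj v hv w hw
  have hdisj1 : ∀ v : V, Disjoint (G.neighborFinset v ∩ V₁) V₂ :=
    fun v => (hdisj.mono_left (Finset.inter_subset_right)).symm.symm
  have hcard1 : ∀ v ∈ V₁, (G.neighborFinset v ∩ V₁).card + k = d := by
    intro v hv
    have := hdeg v hv
    rw [← SimpleGraph.card_neighborFinset_eq_degree] at this
    rw [hnbr1 v hv, Finset.card_union_of_disjoint (hdisj1 v), hV2card] at this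
    exact this
  -- the eigen-equation in convenient forms
  have keyeq : ∀ (μ : ℝ) (f : V → ℝ), (normLap G).mulVec f = μ • f →
      ∀ v : V, (μ - 1) * f v * (G.degree v : ℝ) = -(∑ w ∈ G.neighborFinset v, f w) := by
    intro μ f hf v
    have h1 : f v - (∑ w ∈ G.neighborFinset v, f w) / (G.degree v : ℝ) = μ * f v := by
      rw [← mulVec_normLap, hf]; rfl
    rcases eq_or_ne (G.degree v : ℝ) 0 with h | h
    · have : G.degree v = 0 := by exact_mod_cast h
      have hne : G.neighborFinset v = ∅ := by
        rw [← SimpleGraph.card_neighborFinset_eq_degree] at this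
        exact Finset.card_eq_zero.mp this
      rw [hne, h]
      simp
    · field_simp at h1
      linear_combination -h1
  have hdne : (d:ℝ) ≠ 0 := Nat.cast_ne_zero.mpr hd0.ne'
  have hmne : (m:ℝ) ≠ 0 := Nat.cast_ne_zero.mpr hm0.ne'
  have hV2ne : V₂.Nonempty := Finset.card_pos.mp (hV2card ▸ hk)
  have hlow : ((d:ℝ)+k)/d ≤ lam := by
    apply hlam.2
    refine ⟨fun v => if v ∈ V₁ then (k:ℝ) else -(d:ℝ), ?_, ?_⟩
    · intro h
      obtain ⟨v, hv⟩ := hV2ne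
      have h2 := congrFun h v
      have hv1 : v ∉ V₁ := fun h1 => (Finset.disjoint_left.mp hdisj h1 hv)
      simp [hv1] at h2
      exact hd0.ne' (by exact_mod_cast h2)
    · funext v
      rw [mulVec_normLap]
      simp only [Pi.smul_apply, smul_eq_mul]
      by_cases hv : v ∈ V₁
      · rw [hdeg v hv, hnbr1 v hv, Finset.sum_union (hdisj1 v)]
        have e1 : ∑ w ∈ G.neighborFinset v ∩ V₁, (if w ∈ V₁ then (k:ℝ) else -(d:ℝ))
            = ((G.neighborFinset v ∩ V₁).card : ℝ) * k := by
          rw [Finset.sum_congr rfl (fun w hw => if_pos (Finset.mem_inter.mp hw).2),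
            Finset.sum_const, nsmul_eq_mul]
        have e2 : ∑ w ∈ V₂, (if w ∈ V₁ then (k:ℝ) else -(d:ℝ)) = (k:ℝ) * (-(d:ℝ)) := by
          rw [Finset.sum_congr rfl
            (fun w hw => if_neg (fun h1 => Finset.disjoint_left.mp hdisj h1 hw)),
            Finset.sum_const, nsmul_eq_mul, hV2card]
        rw [e1, e2, if_pos hv]
        have hc : ((G.neighborFinset v ∩ V₁).card : ℝ) = (d:ℝ) - k := by
          have h3 := hcard1 v hv
          have : ((G.neighborFinset v ∩ V₁).card + k : ℝ) = d := by exact_mod_cast congrArg (Nat.cast : ℕ → ℝ) h3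
          linarith
        rw [hc]
        field_simp
        ring
      · have hv2 : v ∈ V₂ := (hmem v).resolve_left hv
        rw [hdeg2 v hv2, hnbr2 v hv2]
        have e1 : ∑ w ∈ V₁, (if w ∈ V₁ then (k:ℝ) else -(d:ℝ)) = (m:ℝ) * k := by
          rw [Finset.sum_congr rfl (fun w hw => if_pos hw), Finset.sum_const, nsmul_eq_mul]
        rw [e1, if_neg hv]
        field_simp
        ring
  refine ⟨hlow, ?_⟩
  have hk0r : (0:ℝ) < k := by exact_mod_cast hk
  have hd0r : (0:ℝ) < d := by exact_mod_cast hd0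
  have hlam1 : 1 < lam := by
    have h1 : (1:ℝ) < ((d:ℝ)+k)/d := by
      rw [lt_div_iff₀ hd0r]; linarith
    linarith
  have hcardf : ∀ v ∈ V₁, ((G.neighborFinset v ∩ V₁).card : ℝ) = (d:ℝ) - k := by
    intro v hv
    have h3 := hcard1 v hv
    have h4 : ((G.neighborFinset v ∩ V₁).card + k : ℝ) = d := by exact_mod_cast congrArg (Nat.cast : ℕ → ℝ) h3
    linarith
  have hmr : (m:ℝ) + k = n := by exact_mod_cast hnm.symm
  obtain ⟨f, hf0, heig⟩ := hlam.1
  have key := keyeq lam f heig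
  obtain ⟨v₂, hv₂⟩ := hV2ne
  set b := f v₂ with hbdef
  set S₁ := ∑ v ∈ V₁, f v with hS₁
  have keyV2 : ∀ v ∈ V₂, (lam - 1) * f v * (m:ℝ) = -S₁ := by
    intro v hv
    have h5 := key v
    rwa [hdeg2 v hv, hnbr2 v hv] at h5
  have hconst : ∀ v ∈ V₂, f v = b := by
    intro v hv
    have h1 : (lam - 1) * f v * (m:ℝ) = (lam - 1) * b * (m:ℝ) := by
      rw [keyV2 v hv, keyV2 v₂ hv₂]
    have h2 := mul_right_cancel₀ hmne h1
    exact mul_left_cancel₀ (sub_ne_zero.mpr (by linarith : lam ≠ 1)) h2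
  have hR2 : (lam - 1) * b * (m:ℝ) = -S₁ := keyV2 v₂ hv₂
  have hsumV2 : ∑ w ∈ V₂, f w = (k:ℝ) * b := by
    rw [Finset.sum_congr rfl hconst, Finset.sum_const, nsmul_eq_mul, hV2card]
  have keyV1 : ∀ v ∈ V₁,
      (lam - 1) * f v * (d:ℝ) = -((∑ w ∈ G.neighborFinset v ∩ V₁, f w) + (k:ℝ) * b) := by
    intro v hv
    have h5 := key v
    rwa [hdeg v hv, hnbr1 v hv, Finset.sum_union (hdisj1 v), hsumV2] at h5
  have hfilter : ∀ v, G.neighborFinset v ∩ V₁ = V₁.filter (fun w => G.Adj v w) := by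
    intro v
    ext w
    simp only [Finset.mem_inter, Finset.mem_filter, SimpleGraph.mem_neighborFinset]
    tauto
  have htt : ∑ v ∈ V₁, ∑ w ∈ G.neighborFinset v ∩ V₁, f w = ((d:ℝ) - k) * S₁ := by
    have h1 : ∀ v ∈ V₁, ∑ w ∈ G.neighborFinset v ∩ V₁, f w
        = ∑ w ∈ V₁, if G.Adj v w then f w else 0 := by
      intro v _
      rw [hfilter v, Finset.sum_filter]
    rw [Finset.sum_congr rfl h1, Finset.sum_comm]
    have h2 : ∀ w ∈ V₁, (∑ v ∈ V₁, if G.Adj v w then f w else 0) = ((d:ℝ)-(k:ℝ)) * f w := by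
      intro w hw
      rw [← Finset.sum_filter, Finset.sum_const, nsmul_eq_mul]
      have h3 : V₁.filter (fun v => G.Adj v w) = G.neighborFinset w ∩ V₁ := by
        rw [hfilter w]
        apply Finset.filter_congr
        intro v _
        rw [G.adj_comm]
      rw [h3, hcardf w hw]
    rw [Finset.sum_congr rfl h2, ← Finset.mul_sum]
  have hsumV1 : (lam - 1) * S₁ * (d:ℝ) = -(((d:ℝ) - k) * S₁ + (m:ℝ) * ((k:ℝ) * b)) := by
    have h0 : ∑ v ∈ V₁, ((lam - 1) * f v * (d:ℝ))
        = ∑ v ∈ V₁, -((∑ w ∈ G.neighborFinset v ∩ V₁, f w) + (k:ℝ) * b) :=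
      Finset.sum_congr rfl keyV1
    rw [← Finset.sum_mul, ← Finset.mul_sum] at h0
    rw [Finset.sum_neg_distrib, Finset.sum_add_distrib, htt, Finset.sum_const,
      nsmul_eq_mul] at h0
    exact h0
  have hS : S₁ = -((lam - 1) * b * (m:ℝ)) := by linarith
  rw [hS] at hsumV1
  have hfactm : b * ((d:ℝ) * (lam - 1) - k) * lam * (m:ℝ) = 0 := by
    linear_combination -hsumV1
  have hfact : b * ((d:ℝ) * (lam - 1) - k) * lam = 0 := by
    rcases mul_eq_zero.mp hfactm with h | h
    · exact h
    · exact absurd h hmne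
  have hlamne : lam ≠ 0 := by linarith
  have hdkn : (d:ℝ) + k ≤ n := by
    have h5 : d + k ≤ n := by omega
    exact_mod_cast h5
  rcases mul_eq_zero.mp hfact with h | h
  swap
  · exact absurd h hlamne
  rcases mul_eq_zero.mp h with hb | hcase
  swap
  · -- lam = (d+k)/d
    have hlameq : lam = ((d:ℝ) + k)/d := by
      field_simp
      linarith
    rw [hlameq]
    gcongr
  · -- b = 0 case
    have keyV1' : ∀ v ∈ V₁, (lam - 1) * f v * (d:ℝ)
        = -(∑ w ∈ G.neighborFinset v ∩ V₁, f w) := by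
      intro v hv
      have h9 := keyV1 v hv
      rw [hb] at h9
      linarith
    set Q := ∑ v ∈ V₁, (f v)^2 with hQ
    have hQpos : 0 < Q := by
      have hex : ∃ v, f v ≠ 0 := by
        by_contra hno'
        push_neg at hno'
        exact hf0 (funext hno')
      obtain ⟨v, hv⟩ := hex
      have hv1 : v ∈ V₁ := by
        rcases hmem v with h1 | h1
        · exact h1
        · exact absurd ((hconst v h1).trans hb) hv
      have h1 : (f v)^2 ≤ Q := Finset.single_le_sum (fun i _ => sq_nonneg (f i)) hv1
      have h2 : 0 < (f v)^2 := by positivity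
      linarith
    set E := ∑ v ∈ V₁, f v * (∑ w ∈ G.neighborFinset v ∩ V₁, f w) with hE
    have hEE : (lam - 1) * Q * (d:ℝ) = -E := by
      have h0 : ∑ v ∈ V₁, ((lam-1) * (f v)^2 * (d:ℝ))
          = ∑ v ∈ V₁, -(f v * (∑ w ∈ G.neighborFinset v ∩ V₁, f w)) := by
        apply Finset.sum_congr rfl
        intro v hv
        linear_combination (f v) * keyV1' v hv
      rw [← Finset.sum_mul, ← Finset.mul_sum, Finset.sum_neg_distrib] at h0
      exact h0
    have hS0 : S₁ = 0 := by rw [hS, hb]; ring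
    have hEd : E = ∑ v ∈ V₁, ∑ w ∈ V₁, (if G.Adj v w then f v * f w else 0) := by
      apply Finset.sum_congr rfl
      intro v _
      rw [hfilter v, Finset.mul_sum, Finset.sum_filter]
    set Ec := ∑ v ∈ V₁, ∑ w ∈ V₁, (if v ≠ w ∧ ¬ G.Adj v w then f v * f w else 0) with hEcdef
    have hEsplit : E = -Q - Ec := by
      rw [hEd]
      have hpt : ∀ v ∈ V₁, ∀ w ∈ V₁, (if G.Adj v w then f v * f w else 0)
          = f v * f w - (if v = w then f v * f w else 0)
            - (if v ≠ w ∧ ¬ G.Adj v w then f v * f w else 0) := by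
        intro v _ w _
        by_cases ha : G.Adj v w
        · have hne : v ≠ w := G.ne_of_adj ha
          simp [ha, hne]
        · by_cases he : v = w
          · simp [ha, he]
          · simp [ha, he]
      have e0 : ∑ v ∈ V₁, ∑ w ∈ V₁, (if G.Adj v w then f v * f w else 0)
          = ∑ v ∈ V₁, ∑ w ∈ V₁, (f v * f w - (if v = w then f v * f w else 0)
            - (if v ≠ w ∧ ¬ G.Adj v w then f v * f w else 0)) := by
        apply Finset.sum_congr rfl
        intro v hv
        exact Finset.sum_congr rfl (hpt v hv)
      rw [e0]
      simp only [Finset.sum_sub_distrib]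
      have e1 : ∑ v ∈ V₁, ∑ w ∈ V₁, f v * f w = 0 := by
        rw [← Finset.sum_mul_sum, ← hS₁, hS0, mul_zero]
      have e2 : ∑ v ∈ V₁, ∑ w ∈ V₁, (if v = w then f v * f w else 0) = Q := by
        apply Finset.sum_congr rfl
        intro v hv
        rw [Finset.sum_ite_eq, if_pos hv, sq]
      rw [e1, e2]
      ring
    have hcnt : ∀ v ∈ V₁, ((V₁.filter (fun w => v ≠ w ∧ ¬ G.Adj v w)).card : ℝ)
        = (n:ℝ) - d - 1 := by
      intro v hv
      have hvnotin : v ∉ G.neighborFinset v ∩ V₁ := by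
        intro hvin
        exact G.irrefl ((SimpleGraph.mem_neighborFinset G v v).mp (Finset.mem_inter.mp hvin).1)
      have hcompl : V₁.filter (fun w => ¬(v ≠ w ∧ ¬ G.Adj v w))
          = insert v (G.neighborFinset v ∩ V₁) := by
        ext w
        simp only [Finset.mem_filter, Finset.mem_insert, Finset.mem_inter,
          SimpleGraph.mem_neighborFinset, not_and, not_not, ne_eq]
        constructor
        · rintro ⟨hw, hcond⟩
          by_cases he : w = v
          · exact Or.inl he
          · exact Or.inr ⟨hcond (fun h => he h.symm), hw⟩
        · rintro (he | ⟨ha, hw⟩)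
          · exact ⟨he ▸ hv, fun hne => absurd he.symm hne⟩
          · exact ⟨hw, fun _ => ha⟩
      have h5 := Finset.card_filter_add_card_filter_not
        (s := V₁) (p := fun w => v ≠ w ∧ ¬ G.Adj v w)
      rw [hcompl, Finset.card_insert_of_notMem hvnotin] at h5
      have h6 : ((V₁.filter (fun w => v ≠ w ∧ ¬ G.Adj v w)).card : ℝ)
          + (((G.neighborFinset v ∩ V₁).card : ℝ) + 1) = (m:ℝ) := by
        exact_mod_cast congrArg (Nat.cast : ℕ → ℝ) h5
      rw [hcardf v hv] at h6
      linarith [hmr]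
    have hcnt' : ∀ w ∈ V₁, ((V₁.filter (fun v => v ≠ w ∧ ¬ G.Adj v w)).card : ℝ)
        = (n:ℝ) - d - 1 := by
      intro w hw
      have heq : V₁.filter (fun v => v ≠ w ∧ ¬ G.Adj v w)
          = V₁.filter (fun v => w ≠ v ∧ ¬ G.Adj w v) := by
        apply Finset.filter_congr
        intro v _
        rw [ne_comm, G.adj_comm]
      rw [heq, hcnt w hw]
    have hEcle : Ec ≤ ((n:ℝ) - d - 1) * Q := by
      have hstep1 : Ec ≤ ∑ v ∈ V₁, ∑ w ∈ V₁,
          (if v ≠ w ∧ ¬ G.Adj v w then ((f v)^2 + (f w)^2)/2 else 0) := by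
        apply Finset.sum_le_sum
        intro v _
        apply Finset.sum_le_sum
        intro w _
        by_cases hc : v ≠ w ∧ ¬ G.Adj v w
        · simp only [if_pos hc]
          nlinarith [sq_nonneg (f v - f w)]
        · simp [hc]
      have hsp : ∀ v w : V, (if v ≠ w ∧ ¬ G.Adj v w then ((f v)^2 + (f w)^2)/2 else 0)
          = (if v ≠ w ∧ ¬ G.Adj v w then (f v)^2/2 else 0)
            + (if v ≠ w ∧ ¬ G.Adj v w then (f w)^2/2 else 0) := by
        intro v w
        by_cases hc : v ≠ w ∧ ¬ G.Adj v w
        · simp only [if_pos hc]; ring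
        · simp [hc]
      have hA : ∑ v ∈ V₁, ∑ w ∈ V₁, (if v ≠ w ∧ ¬ G.Adj v w then (f v)^2/2 else 0)
          = ((n:ℝ) - d - 1) * (Q/2) := by
        have h7 : ∀ v ∈ V₁, ∑ w ∈ V₁, (if v ≠ w ∧ ¬ G.Adj v w then (f v)^2/2 else 0)
            = ((n:ℝ) - d - 1) * ((f v)^2/2) := by
          intro v hv
          rw [← Finset.sum_filter, Finset.sum_const, nsmul_eq_mul, hcnt v hv]
        rw [Finset.sum_congr rfl h7, ← Finset.mul_sum, ← Finset.sum_div]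
      have hB : ∑ v ∈ V₁, ∑ w ∈ V₁, (if v ≠ w ∧ ¬ G.Adj v w then (f w)^2/2 else 0)
          = ((n:ℝ) - d - 1) * (Q/2) := by
        rw [Finset.sum_comm]
        have h7 : ∀ w ∈ V₁, ∑ v ∈ V₁, (if v ≠ w ∧ ¬ G.Adj v w then (f w)^2/2 else 0)
            = ((n:ℝ) - d - 1) * ((f w)^2/2) := by
          intro w hw
          rw [← Finset.sum_filter, Finset.sum_const, nsmul_eq_mul, hcnt' w hw]
        rw [Finset.sum_congr rfl h7, ← Finset.mul_sum, ← Finset.sum_div]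
      have hsum2 : ∑ v ∈ V₁, ∑ w ∈ V₁,
          (if v ≠ w ∧ ¬ G.Adj v w then ((f v)^2 + (f w)^2)/2 else 0)
          = ((n:ℝ) - d - 1) * Q := by
        simp only [hsp, Finset.sum_add_distrib]
        rw [hA, hB]
        ring
      linarith
    have hbound : -E ≤ ((n:ℝ) - d) * Q := by
      rw [hEsplit]
      have hr : ((n:ℝ)-d)*Q = ((n:ℝ)-d-1)*Q + Q := by ring
      linarith
    have hfin : (lam - 1) * (d:ℝ) * Q ≤ ((n:ℝ) - d) * Q := by
      have hr2 : (lam - 1) * (d:ℝ) * Q = (lam - 1) * Q * (d:ℝ) := by ring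
      linarith
    have hfin2 : (lam - 1) * (d:ℝ) ≤ (n:ℝ) - d := by
      by_contra hcon
      push_neg at hcon
      have h8 := mul_lt_mul_of_pos_right hcon hQpos
      linarith
    rw [le_div_iff₀ hd0r]
    nlinarith [hfin2, hd0r]
end

section
/- In any (k,d)-one-sided bipartite graph, (d+k)/d is an eigenvalue of the normalized Laplacian. -/
theorem stmt12 {V : Type*} [Fintype V] [DecidableEq V] (G : SimpleGraph V)
    [DecidableRel G.Adj] (V₁ V₂ : Finset V) (n k d : ℕ)
    (hn : n = Fintype.card V) (hk : 0 < k) (hk2 : k ≤ n - 2)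
    (hkd : k ≤ d) (hdn : d ≤ n - 1)
    (hG : IsOneSidedBipartite G V₁ V₂ k d) :
    ∃ f : V → ℝ, f ≠ 0 ∧
      (normLap G).mulVec f = (((d : ℝ) + (k : ℝ)) / (d : ℝ)) • f := by
  obtain ⟨hdisj, huniv, hcard2, hadj, hnadj, hdeg⟩ := hG
  have hd : 0 < d := lt_of_lt_of_le hk hkd
  have hdR : (d : ℝ) ≠ 0 := Nat.cast_ne_zero.mpr hd.ne'
  set f : V → ℝ := fun v => if v ∈ V₁ then (k : ℝ) else -(d : ℝ) with hf
  obtain ⟨v₂, hv₂⟩ : V₂.Nonempty := Finset.card_pos.mp (hcard2 ▸ hk)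
  have hmem : ∀ v : V, v ∉ V₁ → v ∈ V₂ := by
    intro v hv
    have : v ∈ V₁ ∪ V₂ := huniv ▸ Finset.mem_univ v
    rcases Finset.mem_union.mp this with h | h
    · exact absurd h hv
    · exact h
  have hnot : ∀ v ∈ V₂, v ∉ V₁ := fun v hv hv1 =>
    Finset.disjoint_left.mp hdisj hv1 hv
  have hcardsum : V₁.card + V₂.card = n := by
    rw [hn, ← Finset.card_union_of_disjoint hdisj, huniv, Finset.card_univ]
  have hcard1pos : 0 < V₁.card := by omega
  refine ⟨f, ?_, ?_⟩
  · intro h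
    have h0 : f v₂ = 0 := congrFun h v₂
    rw [hf] at h0
    simp only [if_neg (hnot v₂ hv₂)] at h0
    exact hdR (by linarith)
  · funext v
    have hrow : (normLap G).mulVec f v
        = f v - (1 / (G.degree v : ℝ)) * ∑ w ∈ G.neighborFinset v, f w := by
      simp only [normLap, Matrix.sub_mulVec, Matrix.one_mulVec, Pi.sub_apply]
      congr 1
      simp only [Matrix.mulVec, dotProduct, Matrix.of_apply]
      rw [Finset.mul_sum, SimpleGraph.neighborFinset_eq_filter, Finset.sum_filter]
      refine Finset.sum_congr rfl fun w _ => ?_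
      split <;> simp
    rw [hrow]
    simp only [Pi.smul_apply, smul_eq_mul]
    by_cases hv : v ∈ V₁
    · -- degree d, neighbors: V₂ plus d-k inside V₁
      have hdegv : G.degree v = d := hdeg v hv
      have hsub : V₂ ⊆ G.neighborFinset v := fun w hw =>
        (SimpleGraph.mem_neighborFinset _ _ _).mpr (hadj v hv w hw)
      have hfilt : (G.neighborFinset v).filter (fun w => ¬ w ∈ V₁) = V₂ := by
        ext w
        simp only [Finset.mem_filter]
        constructor
        · rintro ⟨_, hw⟩; exact hmem w hw
        · intro hw; exact ⟨hsub hw, hnot w hw⟩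
      have hcardf : ((G.neighborFinset v).filter (fun w => w ∈ V₁)).card = d - k := by
        have := Finset.card_filter_add_card_filter_not
          (s := G.neighborFinset v) (p := fun w => w ∈ V₁)
        rw [hfilt, hcard2, SimpleGraph.card_neighborFinset_eq_degree, hdegv] at this
        omega
      have hsum : ∑ w ∈ G.neighborFinset v, f w
          = ((d : ℝ) - k) * k + k * (-(d : ℝ)) := by
        rw [hf]
        rw [Finset.sum_ite]
        simp only [Finset.sum_const, nsmul_eq_mul]
        rw [hfilt, hcard2, hcardf]
        push_cast [Nat.cast_sub hkd]
        ring
      rw [hsum, hdegv]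
      simp only [hf, if_pos hv]
      field_simp
      ring
    · -- v ∈ V₂ : neighbors = V₁
      have hv₂' : v ∈ V₂ := hmem v hv
      have hnbr : G.neighborFinset v = V₁ := by
        ext w
        rw [SimpleGraph.mem_neighborFinset]
        constructor
        · intro h
          by_contra hw
          exact hnadj v hv₂' w (hmem w hw) h
        · intro hw
          exact (hadj w hw v hv₂').symm
      have hdegv : (G.degree v : ℝ) = V₁.card := by
        rw [← SimpleGraph.card_neighborFinset_eq_degree, hnbr]
      have hsum : ∑ w ∈ G.neighborFinset v, f w = (V₁.card : ℝ) * k := by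
        rw [hnbr, hf]
        rw [Finset.sum_congr rfl (fun w hw => if_pos hw)]
        simp [Finset.sum_const, mul_comm]
      have hc1 : (V₁.card : ℝ) ≠ 0 := Nat.cast_ne_zero.mpr hcard1pos.ne'
      rw [hsum, hdegv]
      simp only [hf, if_neg hv]
      field_simp
      ring
end

section
/- In a (k,d)-one-sided bipartite graph with d ≥ n−k, for every edge {v,w} the number of common neighbors satisfies |N(v)∩N(w)| ≥ d−k when both endpoints are in V₁, and |N(v)∩N(w)| = d−k when one endpoint is in V₁ and one in V₂; consequently min over edges of |N(v)∩N(w)|/max(deg v, deg w) = (d−k)/d. -/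
theorem stmt15' {V : Type*} [Fintype V] [DecidableEq V] (G : SimpleGraph V)
    [DecidableRel G.Adj] (V₁ V₂ : Finset V) (n k d : ℕ)
    (hn : n = Fintype.card V) (hk : 0 < k) (hk2 : k ≤ n - 2)
    (hkd : k ≤ d) (hdn : d ≤ n - 1) (hd : n - k ≤ d)
    (hdisj : Disjoint V₁ V₂) (huniv : V₁ ∪ V₂ = Finset.univ) (hV2 : V₂.card = k)
    (hadj : ∀ v ∈ V₁, ∀ w ∈ V₂, G.Adj v w)
    (hnadj : ∀ v ∈ V₂, ∀ w ∈ V₂, ¬ G.Adj v w)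
    (hdeg : ∀ v ∈ V₁, G.degree v = d) :
    (∀ v w : V, v ∈ V₁ → w ∈ V₁ → G.Adj v w →
      d - k ≤ (G.commonNeighbors v w).ncard) ∧
    (∀ v w : V, v ∈ V₁ → w ∈ V₂ → G.Adj v w →
      (G.commonNeighbors v w).ncard = d - k) ∧
    IsLeast {x : ℝ | ∃ v w : V, G.Adj v w ∧
      x = ((G.commonNeighbors v w).ncard : ℝ) /
          ((max (G.degree v) (G.degree w) : ℕ) : ℝ)}
      (((d : ℝ) - (k : ℝ)) / (d : ℝ)) := by
  have hncard : ∀ v w : V, (G.commonNeighbors v w).ncard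
      = (G.neighborFinset v ∩ G.neighborFinset w).card := by
    intro v w
    rw [← Set.ncard_coe_finset]
    congr 1
    simp [SimpleGraph.commonNeighbors, Finset.coe_inter, SimpleGraph.neighborFinset_def, Set.coe_toFinset]
  have hmem : ∀ u : V, u ∈ V₁ ∨ u ∈ V₂ := by
    intro u
    have : u ∈ V₁ ∪ V₂ := by rw [huniv]; exact Finset.mem_univ u
    simpa using this
  have hnot : ∀ u : V, u ∈ V₂ → u ∉ V₁ := fun u hu h1 =>
    Finset.disjoint_left.mp hdisj h1 hu
  have hNw : ∀ w ∈ V₂, G.neighborFinset w = V₁ := by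
    intro w hw
    ext u
    simp only [SimpleGraph.mem_neighborFinset]
    constructor
    · intro hadj'
      rcases hmem u with h | h
      · exact h
      · exact absurd hadj' (hnadj w hw u h)
    · intro hu
      exact (hadj u hu w hw).symm
  have hV1 : V₁.card = n - k := by
    have : V₁.card + V₂.card = Fintype.card V := by
      rw [← Finset.card_union_of_disjoint hdisj, huniv, Finset.card_univ]
    omega
  have part1 : ∀ v w : V, v ∈ V₁ → w ∈ V₁ → G.Adj v w →
      d - k ≤ (G.commonNeighbors v w).ncard := by
    intro v w hv hw _
    rw [hncard]
    have h1 : (G.neighborFinset v ∩ G.neighborFinset w).card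
        + (G.neighborFinset v ∪ G.neighborFinset w).card
        = (G.neighborFinset v).card + (G.neighborFinset w).card :=
      Finset.card_inter_add_card_union _ _
    have h2 : (G.neighborFinset v ∪ G.neighborFinset w).card ≤ n := by
      rw [hn]; exact Finset.card_le_univ _
    have hv' : (G.neighborFinset v).card = d := hdeg v hv
    have hw' : (G.neighborFinset w).card = d := hdeg w hw
    omega
  have part2 : ∀ v w : V, v ∈ V₁ → w ∈ V₂ → G.Adj v w →
      (G.commonNeighbors v w).ncard = d - k := by
    intro v w hv hw _
    rw [hncard, hNw w hw]
    have hsub : V₂ ⊆ G.neighborFinset v := by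
      intro u hu
      rw [SimpleGraph.mem_neighborFinset]
      exact hadj v hv u hu
    have heq : G.neighborFinset v ∩ V₁ = G.neighborFinset v \ V₂ := by
      ext u
      simp only [Finset.mem_inter, Finset.mem_sdiff]
      constructor
      · rintro ⟨h1, h2⟩; exact ⟨h1, fun hh => hnot u hh h2⟩
      · rintro ⟨h1, h2⟩
        refine ⟨h1, ?_⟩
        rcases hmem u with h | h
        · exact h
        · exact absurd h h2
    have hdv : (G.neighborFinset v).card = d := hdeg v hv
    rw [heq, Finset.card_sdiff_of_subset hsub, hV2, hdv]
  have hdegw : ∀ w ∈ V₂, G.degree w = n - k := by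
    intro w hw
    rw [SimpleGraph.degree, hNw w hw, hV1]
  have hd0 : (0:ℝ) < (d:ℝ) := by
    have : 0 < d := by omega
    exact_mod_cast this
  have hcast : ((d:ℝ) - (k:ℝ)) = ((d - k : ℕ) : ℝ) := by
    rw [Nat.cast_sub hkd]
  refine ⟨part1, part2, ?_, ?_⟩
  · have hV1ne : V₁.Nonempty := by
      rw [← Finset.card_pos, hV1]; omega
    have hV2ne : V₂.Nonempty := by
      rw [← Finset.card_pos, hV2]; omega
    obtain ⟨v, hv⟩ := hV1ne
    obtain ⟨w, hw⟩ := hV2ne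
    refine ⟨v, w, hadj v hv w hw, ?_⟩
    rw [part2 v w hv hw (hadj v hv w hw), hdeg v hv, hdegw w hw,
      max_eq_left hd, hcast]
  · rintro x ⟨v, w, hvw, rfl⟩
    have key : ∀ v w : V, v ∈ V₁ → w ∈ V₂ → G.Adj v w →
        ((d:ℝ) - k) / d ≤ ((G.commonNeighbors v w).ncard : ℝ) /
          ((max (G.degree v) (G.degree w) : ℕ) : ℝ) := by
      intro v w hv hw h
      rw [part2 v w hv hw h, hdeg v hv, hdegw w hw, max_eq_left hd, hcast]
    rcases hmem v with hv | hv <;> rcases hmem w with hw | hw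
    · -- both V₁
      rw [hdeg v hv, hdeg w hw, max_self, hcast]
      have := part1 v w hv hw hvw
      gcongr
    · exact key v w hv hw hvw
    · have := key w v hw hv hvw.symm
      rwa [SimpleGraph.commonNeighbors_symm, max_comm] at this
    · exact absurd hvw (hnadj v hv w hw)


theorem stmt15 {V : Type*} [Fintype V] [DecidableEq V] (G : SimpleGraph V)
    [DecidableRel G.Adj] (V₁ V₂ : Finset V) (n k d : ℕ)
    (hn : n = Fintype.card V) (hk : 0 < k) (hk2 : k ≤ n - 2)
    (hkd : k ≤ d) (hdn : d ≤ n - 1) (hd : n - k ≤ d)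
    (hG : IsOneSidedBipartite G V₁ V₂ k d) :
    (∀ v w : V, v ∈ V₁ → w ∈ V₁ → G.Adj v w →
      d - k ≤ (G.commonNeighbors v w).ncard) ∧
    (∀ v w : V, v ∈ V₁ → w ∈ V₂ → G.Adj v w →
      (G.commonNeighbors v w).ncard = d - k) ∧
    IsLeast {x : ℝ | ∃ v w : V, G.Adj v w ∧
      x = ((G.commonNeighbors v w).ncard : ℝ) /
          ((max (G.degree v) (G.degree w) : ℕ) : ℝ)}
      (((d : ℝ) - (k : ℝ)) / (d : ℝ)) := by
  obtain ⟨hdisj, huniv, hV2, hadj, hnadj, hdeg⟩ := hG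
  exact stmt15' G V₁ V₂ n k d hn hk hk2 hkd hdn hd hdisj huniv hV2 hadj hnadj hdeg
end
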